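/- arXiv:math/9509214 — 7 statements merged into one kernel-verified Lean document; each statement's English description precedes it below -/
import Mathlib

section
/- Let H be a separable Hilbert space and let {f_i}_{i∈I} be a Riesz frame for H, i.e., a frame such that every subfamily {f_i}_{i∈J}, J ⊆ I, is a frame for its closed linear span, with a lower frame bound A > 0 common to all these subfamilies. Then {f_i}_{i∈I} contains a Riesz basis for H: there exists a subset I′ ⊆ I such that {f_i}_{i∈I′} is a Riesz basis for H. -/
open scoped BigOperators

/-- `f` is a Riesz basis for `H`: its closed linear span is all of `H` and there are
constants `c, C > 0` with `c·∑|aᵢ|² ≤ ‖∑ aᵢ fᵢ‖² ≤ C·∑|aᵢ|²` for every finitely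
supported scalar sequence. -/
def IsRieszBasis {H : Type*} [NormedAddCommGroup H] [InnerProductSpace ℝ H]
    {I : Type*} (f : I → H) : Prop :=
  (Submodule.span ℝ (Set.range f)).topologicalClosure = ⊤ ∧
  ∃ c C : ℝ, 0 < c ∧ 0 < C ∧ ∀ (s : Finset I) (a : I → ℝ),
    c * ∑ i ∈ s, (a i) ^ 2 ≤ ‖∑ i ∈ s, a i • f i‖ ^ 2 ∧
    ‖∑ i ∈ s, a i • f i‖ ^ 2 ≤ C * ∑ i ∈ s, (a i) ^ 2

/-- Finite-dimensional key lemma: a linearly independent finite family with lower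
frame bound `A` on its span satisfies the lower Riesz inequality with constant `A`. -/
lemma aux_fin {H : Type*} [NormedAddCommGroup H] [InnerProductSpace ℝ H]
    {ι : Type*} (s : Finset ι) (f : ι → H)
    (hli : LinearIndependent ℝ (fun i : s => f (i : ι)))
    (a : ι → ℝ) (A : ℝ) (hA : 0 < A)
    (hlb : ∀ x ∈ Submodule.span ℝ (f '' (↑s : Set ι)),
      A * ‖x‖ ^ 2 ≤ ∑ i ∈ s, (inner ℝ x (f i) : ℝ) ^ 2) :
    A * ∑ i ∈ s, (a i) ^ 2 ≤ ‖∑ i ∈ s, a i • f i‖ ^ 2 := by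
  classical
  set V := Submodule.span ℝ (f '' (↑s : Set ι)) with hV
  have himg : f '' (↑s : Set ι) = Set.range (fun i : s => f (i : ι)) := by
    ext v; simp [Set.mem_image]
  haveI : FiniteDimensional ℝ V := by
    apply FiniteDimensional.span_of_finite
    exact (s.finite_toSet.image f)
  have hrank : Module.finrank ℝ V = s.card := by
    rw [hV, himg, finrank_span_eq_card hli, Fintype.card_coe]
  -- the analysis-type map
  let T : V →ₗ[ℝ] (s → ℝ) :=
    { toFun := fun y i => (inner ℝ (y : H) (f (i : ι)) : ℝ)
      map_add' := by intro y z; funext i; simp [inner_add_left]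
      map_smul' := by intro c y; funext i; simp [real_inner_smul_left] }
  have hTinj : Function.Injective T := by
    rw [← LinearMap.ker_eq_bot, Submodule.eq_bot_iff]
    intro y hy
    have hy0 : ∀ i : s, (inner ℝ (y : H) (f (i : ι)) : ℝ) = 0 := fun i =>
      congrFun (LinearMap.mem_ker.mp hy) i
    have horth : ∀ u ∈ V, (inner ℝ (y : H) u : ℝ) = 0 := by
      intro u hu
      induction hu using Submodule.span_induction with
      | mem u hu =>
        obtain ⟨i, hi, rfl⟩ := hu
        exact hy0 ⟨i, hi⟩
      | zero => simp
      | add u v _ _ hu hv => simp [inner_add_right, hu, hv]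
      | smul c u _ hu => simp [inner_smul_right, hu]
    have : (inner ℝ (y : H) (y : H) : ℝ) = 0 := horth _ y.2
    ext
    simpa using inner_self_eq_zero.mp this
  have hTsurj : Function.Surjective T := by
    have : Module.finrank ℝ V = Module.finrank ℝ (s → ℝ) := by
      rw [hrank, Module.finrank_pi, Fintype.card_coe]
    exact (LinearMap.injective_iff_surjective_of_finrank_eq_finrank this).mp hTinj
  obtain ⟨y, hy⟩ := hTsurj (fun i : s => a (i : ι))
  have hyi : ∀ i ∈ s, (inner ℝ (y : H) (f i) : ℝ) = a i := by
    intro i hi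
    exact congrFun hy ⟨i, hi⟩
  set S := ∑ i ∈ s, (a i) ^ 2 with hS
  have hSnn : 0 ≤ S := Finset.sum_nonneg fun i _ => sq_nonneg _
  set x := ∑ i ∈ s, a i • f i with hx
  -- lower frame bound applied to y
  have hyV : (y : H) ∈ V := y.2
  have h1 : A * ‖(y : H)‖ ^ 2 ≤ S := by
    have := hlb (y : H) hyV
    calc A * ‖(y : H)‖ ^ 2 ≤ ∑ i ∈ s, (inner ℝ (y : H) (f i) : ℝ) ^ 2 := this
      _ = S := Finset.sum_congr rfl fun i hi => by rw [hyi i hi]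
  -- ⟪x, y⟫ = S
  have h2 : (inner ℝ x (y : H) : ℝ) = S := by
    rw [hx, sum_inner]
    refine Finset.sum_congr rfl fun i hi => ?_
    rw [real_inner_smul_left, real_inner_comm, hyi i hi, sq]
  have h3 : S ≤ ‖x‖ * ‖(y : H)‖ := by
    rw [← h2]; exact real_inner_le_norm x y
  rcases eq_or_lt_of_le hSnn with h0 | hSpos
  · rw [← h0, mul_zero]; positivity
  · -- A * S ≤ ‖x‖^2
    nlinarith [norm_nonneg x, norm_nonneg (y : H), sq_nonneg (‖x‖ - ‖(y : H)‖),
      mul_le_mul h3 h3 hSnn (mul_nonneg (norm_nonneg x) (norm_nonneg (y : H)))]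

theorem stmt_0 {H : Type*} [NormedAddCommGroup H] [InnerProductSpace ℝ H]
    [CompleteSpace H] [TopologicalSpace.SeparableSpace H]
    {I : Type*} (f : I → H)
    -- `f` is a frame for `H`
    (hframe : ∃ A B : ℝ, 0 < A ∧ 0 < B ∧ ∀ x : H,
      A * ‖x‖ ^ 2 ≤ ∑' i, (inner ℝ x (f i) : ℝ) ^ 2 ∧
      ∑' i, (inner ℝ x (f i) : ℝ) ^ 2 ≤ B * ‖x‖ ^ 2)
    -- every subfamily is a frame for its closed linear span, with a common lower bound `A`
    (A : ℝ) (hA : 0 < A)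
    (hsub : ∀ J : Set I, ∃ B : ℝ, 0 < B ∧
      ∀ x ∈ (Submodule.span ℝ (f '' J)).topologicalClosure,
        A * ‖x‖ ^ 2 ≤ ∑' i : J, (inner ℝ x (f (i : I)) : ℝ) ^ 2 ∧
        ∑' i : J, (inner ℝ x (f (i : I)) : ℝ) ^ 2 ≤ B * ‖x‖ ^ 2) :
    ∃ I' : Set I, IsRieszBasis (fun i : I' => f (i : I)) := by
  classical
  obtain ⟨A₀, B, hA₀, hB, hfr⟩ := hframe
  -- choose a maximal linearly independent subset of the range
  obtain ⟨t, hts, htspan, htli⟩ := exists_linearIndependent ℝ (Set.range f)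
  -- pick an index for each vector in t
  have hchoice : ∀ v : t, ∃ i : I, f i = (v : H) := fun v => hts v.2
  choose g hg using hchoice
  set I' : Set I := Set.range g with hI'
  -- the family over I' is essentially t
  have hmem : ∀ i : I', f (i : I) ∈ t := by
    rintro ⟨i, v, rfl⟩
    rw [hg v]; exact v.2
  have hinj : Function.Injective (fun i : I' => f (i : I)) := by
    rintro ⟨i, v, rfl⟩ ⟨j, w, rfl⟩ h
    simp only at h
    rw [hg v, hg w] at h
    have : v = w := Subtype.ext h
    subst this
    rfl
  have hliI' : LinearIndependent ℝ (fun i : I' => f (i : I)) := by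
    have he : Function.Injective (fun i : I' => (⟨f (i : I), hmem i⟩ : t)) := by
      intro i j h
      simp only [Subtype.mk.injEq] at h
      exact hinj h
    exact htli.comp _ he
  have himg : f '' I' = t := by
    apply Set.Subset.antisymm
    · rintro v ⟨i, hi, rfl⟩
      exact hmem ⟨i, hi⟩
    · intro v hv
      exact ⟨g ⟨v, hv⟩, Set.mem_range_self _, hg ⟨v, hv⟩⟩
  refine ⟨I', ?_, A, B, hA, hB, ?_⟩
  · -- spanning
    have hrange : Set.range (fun i : I' => f (i : I)) = t := by
      rw [← himg]; ext v; simp [Set.mem_image]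
    rw [hrange, htspan, Submodule.topologicalClosure_eq_top_iff]
    rw [Submodule.eq_bot_iff]
    intro x hx
    have hx0 : ∀ i, (inner ℝ x (f i) : ℝ) = 0 := by
      intro i
      have hfi : f i ∈ Submodule.span ℝ (Set.range f) := Submodule.subset_span ⟨i, rfl⟩
      have h := (Submodule.mem_orthogonal (Submodule.span ℝ (Set.range f)) x).mp hx _ hfi
      rw [real_inner_comm]
      exact h
    have h1 := (hfr x).1
    have h2 : ∑' i, (inner ℝ x (f i) : ℝ) ^ 2 = 0 := by
      simp [hx0]
    rw [h2] at h1
    have : ‖x‖ ^ 2 ≤ 0 := by nlinarith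
    have : ‖x‖ = 0 := by nlinarith [sq_nonneg ‖x‖, norm_nonneg x]
    exact norm_eq_zero.mp this
  · -- Riesz inequalities
    intro s₀ a
    -- transfer to a finset of I and coefficients on I
    set emb : I' ↪ I := ⟨Subtype.val, Subtype.val_injective⟩ with hemb
    set s₁ : Finset I := s₀.map emb with hs₁
    set a' : I → ℝ := fun i => if h : i ∈ I' then a ⟨i, h⟩ else 0 with ha'
    have ha'i : ∀ i : I', a' (i : I) = a i := by
      rintro ⟨i, hi⟩
      simp only [ha', dif_pos hi]
    have hsum1 : ∑ i ∈ s₁, (a' i) ^ 2 = ∑ i ∈ s₀, (a i) ^ 2 := by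
      rw [hs₁, Finset.sum_map]
      exact Finset.sum_congr rfl fun i _ => by
        show a' (i : I) ^ 2 = a i ^ 2
        rw [ha'i i]
    have hsum2 : ∑ i ∈ s₁, a' i • f i = ∑ i ∈ s₀, a i • f (i : I) := by
      rw [hs₁, Finset.sum_map]
      exact Finset.sum_congr rfl fun i _ => by
        show a' (i : I) • f (i : I) = a i • f (i : I)
        rw [ha'i i]
    -- linear independence of the subfamily indexed by s₁
    have hmem₁ : ∀ i : s₁, (i : I) ∈ I' := by
      rintro ⟨i, hi⟩
      rw [hs₁, Finset.mem_map] at hi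
      obtain ⟨j, _, rfl⟩ := hi
      exact j.2
    have hli₁ : LinearIndependent ℝ (fun i : s₁ => f (i : I)) := by
      have he : Function.Injective (fun i : s₁ => (⟨(i : I), hmem₁ i⟩ : I')) := by
        intro i j h
        simp only [Subtype.mk.injEq] at h
        exact Subtype.ext h
      exact hliI'.comp _ he
    constructor
    · -- lower bound via aux_fin and hsub
      rw [← hsum1, ← hsum2]
      apply aux_fin s₁ f hli₁ a' A hA
      intro x hx
      obtain ⟨B', hB', hsubJ⟩ := hsub (↑s₁ : Set I)
      have hxcl : x ∈ (Submodule.span ℝ (f '' (↑s₁ : Set I))).topologicalClosure :=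
        Submodule.le_topologicalClosure _ hx
      have := (hsubJ x hxcl).1
      calc A * ‖x‖ ^ 2 ≤ ∑' i : (↑s₁ : Set I), (inner ℝ x (f (i : I)) : ℝ) ^ 2 := this
        _ = ∑ i ∈ s₁, (inner ℝ x (f i) : ℝ) ^ 2 := by
            rw [tsum_fintype]
            exact Finset.sum_finset_coe (fun i => (inner ℝ x (f i) : ℝ) ^ 2) s₁
    · -- upper bound via global Bessel bound
      rw [← hsum1, ← hsum2]
      set x : H := ∑ i ∈ s₁, a' i • f i with hx
      rcases eq_or_ne x 0 with h0 | h0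
      · rw [h0]
        have : (0:ℝ) ≤ B * ∑ i ∈ s₁, (a' i) ^ 2 := by
          apply mul_nonneg hB.le
          exact Finset.sum_nonneg fun i _ => sq_nonneg _
        simpa using this
      · have hsummable : Summable (fun i => (inner ℝ x (f i) : ℝ) ^ 2) := by
          by_contra hns
          have h1 := (hfr x).1
          rw [tsum_eq_zero_of_not_summable hns] at h1
          have hxpos : 0 < ‖x‖ := norm_pos_iff.mpr h0
          nlinarith [mul_pos hA₀ (pow_pos hxpos 2)]
        have hle : ∑ i ∈ s₁, (inner ℝ x (f i) : ℝ) ^ 2 ≤ B * ‖x‖ ^ 2 := by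
          calc ∑ i ∈ s₁, (inner ℝ x (f i) : ℝ) ^ 2
              ≤ ∑' i, (inner ℝ x (f i) : ℝ) ^ 2 :=
                Summable.sum_le_tsum s₁ (fun i _ => sq_nonneg _) hsummable
            _ ≤ B * ‖x‖ ^ 2 := (hfr x).2
        have hxx : ‖x‖ ^ 2 = ∑ i ∈ s₁, a' i * (inner ℝ x (f i) : ℝ) := by
          rw [← real_inner_self_eq_norm_sq]
          conv_lhs => rw [hx, sum_inner]
          refine Finset.sum_congr rfl fun i hi => ?_
          rw [real_inner_smul_left, real_inner_comm]
        have hcs : (∑ i ∈ s₁, a' i * (inner ℝ x (f i) : ℝ)) ^ 2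
            ≤ (∑ i ∈ s₁, (a' i) ^ 2) * (∑ i ∈ s₁, (inner ℝ x (f i) : ℝ) ^ 2) :=
          Finset.sum_mul_sq_le_sq_mul_sq s₁ _ _
        set S := ∑ i ∈ s₁, (a' i) ^ 2 with hSdef
        have hSnn : 0 ≤ S := Finset.sum_nonneg fun i _ => sq_nonneg _
        have hxpos : 0 < ‖x‖ := norm_pos_iff.mpr h0
        have h4 : ‖x‖ ^ 2 * ‖x‖ ^ 2 ≤ (B * S) * ‖x‖ ^ 2 := by
          calc ‖x‖ ^ 2 * ‖x‖ ^ 2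
              = (∑ i ∈ s₁, a' i * (inner ℝ x (f i) : ℝ)) ^ 2 := by rw [← hxx]; ring
            _ ≤ S * (∑ i ∈ s₁, (inner ℝ x (f i) : ℝ) ^ 2) := hcs
            _ ≤ S * (B * ‖x‖ ^ 2) := mul_le_mul_of_nonneg_left hle hSnn
            _ = (B * S) * ‖x‖ ^ 2 := by ring
        exact le_of_mul_le_mul_right h4 (pow_pos hxpos 2)
end

section
/- Let {f_i}_{i∈I} be a frame for a separable Hilbert space H. Given ε > 0 and a finite set J ⊆ I, there exists a finite set J′ ⊆ I containing J such that ∑_{i∈I∖J′} |⟨f, f_i⟩|² ≤ ε·‖f‖² for all f in the linear span of {f_i}_{i∈J}. -/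
open scoped BigOperators

/-- `f` is a frame for the closed subspace `V`: there are bounds `A, B > 0` with
`A‖x‖² ≤ ∑_i |⟨x, f i⟩|² ≤ B‖x‖²` for all `x ∈ V`. -/
def IsFrameFor {H : Type*} [NormedAddCommGroup H] [InnerProductSpace ℝ H]
    {I : Type*} (f : I → H) (V : Set H) : Prop :=
  ∃ A B : ℝ, 0 < A ∧ 0 < B ∧ ∀ x ∈ V,
    A * ‖x‖ ^ 2 ≤ ∑' i, (inner ℝ x (f i) : ℝ) ^ 2 ∧
    ∑' i, (inner ℝ x (f i) : ℝ) ^ 2 ≤ B * ‖x‖ ^ 2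

theorem stmt_1 {H : Type*} [NormedAddCommGroup H] [InnerProductSpace ℝ H]
    [CompleteSpace H] [TopologicalSpace.SeparableSpace H]
    {I : Type*} (f : I → H) (hf : IsFrameFor f (Set.univ : Set H))
    (ε : ℝ) (hε : 0 < ε) (J : Finset I) :
    ∃ J' : Finset I, J ⊆ J' ∧
      ∀ x ∈ Submodule.span ℝ (f '' (J : Set I)),
        ∑' i : {i : I // i ∉ J'}, (inner ℝ x (f (i : I)) : ℝ) ^ 2 ≤ ε * ‖x‖ ^ 2 := by
  classical
  obtain ⟨A, B, hA, hB, hAB⟩ := hf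
  -- summability for every y
  have hsum : ∀ y : H, Summable (fun i => (inner ℝ y (f i) : ℝ) ^ 2) := by
    intro y
    by_contra h
    have h0 := tsum_eq_zero_of_not_summable h
    have h1 := (hAB y trivial).1
    rw [h0] at h1
    have hy : y = 0 := by
      by_contra hy0
      have hpos : 0 < ‖y‖ := norm_pos_iff.mpr hy0
      nlinarith [mul_pos hA (pow_pos hpos 2)]
    apply h
    simpa [hy] using summable_zero
  set V := Submodule.span ℝ (f '' (J : Set I)) with hV
  haveI : FiniteDimensional ℝ V :=
    FiniteDimensional.span_of_finite ℝ (((J : Set I).toFinite).image f)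
  set n := Module.finrank ℝ V with hn
  set b := stdOrthonormalBasis ℝ V with hb
  -- for each k, pick a finset controlling the tail
  have htail : ∀ k : Fin n, ∃ s : Finset I, ∀ t : Finset I, s ⊆ t →
      ∑' i : {i : I // i ∉ t}, (inner ℝ ((b k : V) : H) (f i) : ℝ) ^ 2 < ε / (n + 1) := by
    intro k
    have h := tendsto_tsum_compl_atTop_zero
      (fun i => (inner ℝ ((b k : V) : H) (f i) : ℝ) ^ 2)
    have hev := (tendsto_order.1 h).2 _ (by positivity : (0:ℝ) < ε / (n + 1))
    rw [Filter.eventually_atTop] at hev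
    obtain ⟨s, hs⟩ := hev
    exact ⟨s, fun t ht => hs t ht⟩
  choose s hs using htail
  refine ⟨J ∪ Finset.univ.biUnion s, Finset.subset_union_left, ?_⟩
  intro x hx
  set J' := J ∪ Finset.univ.biUnion s with hJ'
  -- coordinates
  set c : Fin n → ℝ := fun k => (inner ℝ ((b k : V) : H) x : ℝ) with hc
  have hxV : (⟨x, hx⟩ : V) = ∑ k, c k • b k := by
    conv_lhs => rw [← b.sum_repr' (⟨x, hx⟩ : V)]
    exact Finset.sum_congr rfl fun k _ => rfl
  have hxsum : x = ∑ k, c k • ((b k : V) : H) := by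
    have := congrArg (Subtype.val) hxV
    simpa using this
  have hcsq : ∑ k, c k ^ 2 = ‖x‖ ^ 2 := by
    have h1 : ‖(⟨x, hx⟩ : V)‖ ^ 2 = ∑ k, ‖b.repr (⟨x, hx⟩ : V) k‖ ^ 2 := by
      rw [← b.repr.norm_map (⟨x, hx⟩ : V), EuclideanSpace.norm_eq]
      rw [Real.sq_sqrt (by positivity)]
    have h2 : ∀ k, b.repr (⟨x, hx⟩ : V) k = c k := by
      intro k
      rw [b.repr_apply_apply]
      simp [hc, Submodule.coe_inner]
    simp only [h2, Real.norm_eq_abs, sq_abs] at h1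
    rw [← h1]
    simp
  -- pointwise bound
  have hpt : ∀ i, (inner ℝ x (f i) : ℝ) ^ 2 ≤
      ‖x‖ ^ 2 * ∑ k, (inner ℝ ((b k : V) : H) (f i) : ℝ) ^ 2 := by
    intro i
    have hexp : (inner ℝ x (f i) : ℝ) = ∑ k, c k * (inner ℝ ((b k : V) : H) (f i) : ℝ) := by
      conv_lhs => rw [hxsum]
      rw [sum_inner]
      congr 1; ext k
      rw [real_inner_smul_left]
    rw [hexp, ← hcsq]
    exact Finset.sum_mul_sq_le_sq_mul_sq _ _ _
  -- summability facts
  have hsub : Summable (fun i : {i : I // i ∉ J'} => (inner ℝ x (f (i : I)) : ℝ) ^ 2) :=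
    (hsum x).subtype _
  have hsubk : ∀ k : Fin n,
      Summable (fun i : {i : I // i ∉ J'} => (inner ℝ ((b k : V) : H) (f (i : I)) : ℝ) ^ 2) :=
    fun k => ((hsum _).subtype _)
  have hsubsum : Summable (fun i : {i : I // i ∉ J'} =>
      ‖x‖ ^ 2 * ∑ k, (inner ℝ ((b k : V) : H) (f (i : I)) : ℝ) ^ 2) := by
    exact ((summable_sum (fun k _ => hsubk k)).mul_left _)
  calc ∑' i : {i : I // i ∉ J'}, (inner ℝ x (f (i : I)) : ℝ) ^ 2
      ≤ ∑' i : {i : I // i ∉ J'}, ‖x‖ ^ 2 * ∑ k, (inner ℝ ((b k : V) : H) (f (i : I)) : ℝ) ^ 2 :=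
        Summable.tsum_le_tsum (fun i => hpt i) hsub hsubsum
    _ = ‖x‖ ^ 2 * ∑ k, ∑' i : {i : I // i ∉ J'}, (inner ℝ ((b k : V) : H) (f (i : I)) : ℝ) ^ 2 := by
        rw [tsum_mul_left, Summable.tsum_finsetSum (fun k _ => hsubk k)]
    _ ≤ ‖x‖ ^ 2 * ∑ k : Fin n, ε / (n + 1) := by
        apply mul_le_mul_of_nonneg_left _ (by positivity)
        apply Finset.sum_le_sum
        intro k _
        exact (hs k J' (by
          intro i hi
          exact Finset.mem_union_right _ (Finset.mem_biUnion.2 ⟨k, Finset.mem_univ _, hi⟩))).le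
    _ ≤ ε * ‖x‖ ^ 2 := by
        rw [Finset.sum_const, Finset.card_univ, Fintype.card_fin, nsmul_eq_mul]
        rw [mul_comm]
        apply mul_le_mul_of_nonneg_right _ (by positivity)
        have hn0 : (0:ℝ) < (n : ℝ) + 1 := by positivity
        rw [← mul_div_assoc, div_le_iff₀ hn0]
        nlinarith [Nat.cast_nonneg (α := ℝ) n]
end

section
/- Let {f_i}_{i∈I} be a frame for a separable Hilbert space H with the property that every subfamily {f_i}_{i∈J}, J ⊆ I, is a frame for its closed linear span. Then there exist ε > 0 and finite subsets J ⊆ J′ ⊆ I with the property: for every J″ ⊆ I∖J′, the family {f_i}_{i∈J∪J″} has lower frame bound ≥ ε for its closed linear span. -/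
open scoped BigOperators

set_option maxHeartbeats 1000000 in
theorem stmt_2 {H : Type*} [NormedAddCommGroup H] [InnerProductSpace ℝ H]
    [CompleteSpace H] [TopologicalSpace.SeparableSpace H]
    {I : Type*} (f : I → H)
    (hframe : IsFrameFor f (Set.univ : Set H))
    (hsub : ∀ J : Set I, IsFrameFor (fun i : J => f (i : I))
      ((Submodule.span ℝ (f '' J)).topologicalClosure : Set H)) :
    ∃ ε : ℝ, 0 < ε ∧ ∃ J J' : Finset I, J ⊆ J' ∧
      ∀ J'' : Set I, J'' ⊆ {i | i ∉ J'} →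
        ∀ x ∈ (Submodule.span ℝ (f '' ((J : Set I) ∪ J''))).topologicalClosure,
          ε * ‖x‖ ^ 2 ≤ ∑' i : ((J : Set I) ∪ J'' : Set I), (inner ℝ x (f (i : I)) : ℝ) ^ 2 := by
  classical
  obtain ⟨A, B, hA, hB, hAB⟩ := hframe
  by_contra hcon
  push_neg at hcon
  set q : H → I → ℝ := fun x i => (inner ℝ x (f i) : ℝ) ^ 2 with hq
  have hq0 : ∀ (x : H) (i : I), 0 ≤ q x i := fun x i => sq_nonneg _
  -- summability of the coefficient family
  have hsum : ∀ x : H, Summable (q x) := by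
    intro x
    by_cases hx : x = 0
    · subst hx
      have : q 0 = fun _ => (0:ℝ) := by
        funext i; simp [hq]
      rw [this]; exact summable_zero
    · by_contra hns
      have h1 := (hAB x trivial).1
      have h0 : ∑' i, (inner ℝ x (f i) : ℝ) ^ 2 = 0 := tsum_eq_zero_of_not_summable hns
      rw [h0] at h1
      have hxn : 0 < ‖x‖ := norm_pos_iff.mpr hx
      nlinarith [mul_pos hA (mul_pos hxn hxn), sq_abs ‖x‖, sq_nonneg ‖x‖, pow_pos hxn 2]
  have hup : ∀ x : H, ∑' i, q x i ≤ B * ‖x‖ ^ 2 := fun x => (hAB x trivial).2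
  have hfin : ∀ (x : H) (s : Finset I), ∑ i ∈ s, q x i ≤ B * ‖x‖ ^ 2 :=
    fun x s => le_trans (Summable.sum_le_tsum s (fun i _ => hq0 x i) (hsum x)) (hup x)
  -- a finset sum inside a set is bounded by the subtype tsum
  have hsub_tsum : ∀ (x : H) (S : Set I) (s : Finset I), (↑s : Set I) ⊆ S →
      ∑ i ∈ s, q x i ≤ ∑' i : S, q x ↑i := by
    intro x S s hsS
    rw [tsum_subtype S (fun i => q x i)]
    calc ∑ i ∈ s, q x i = ∑ i ∈ s, S.indicator (q x) i :=
          Finset.sum_congr rfl (fun i hi => (Set.indicator_of_mem (hsS hi) _).symm)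
      _ ≤ ∑' i, S.indicator (q x) i :=
          Summable.sum_le_tsum s (fun i _ => Set.indicator_nonneg (fun j _ => hq0 x j) i)
            ((hsum x).indicator S)
  -- tails can be made small
  have tail : ∀ (x : H) (δ : ℝ), 0 < δ → ∃ E : Finset I, ∑' i : {i // i ∉ E}, q x ↑i < δ := by
    intro x δ hδ
    exact ((tendsto_tsum_compl_atTop_zero (q x)).eventually_lt_const hδ).exists
  -- approximation from the closure of the span by elements of spans of finite subfamilies
  have approx : ∀ (S : Set I) (g : H), g ∈ (Submodule.span ℝ (f '' S)).topologicalClosure →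
      ∀ δ : ℝ, 0 < δ → ∃ (T : Finset I) (z : H), (↑T : Set I) ⊆ S ∧
        z ∈ Submodule.span ℝ (f '' (T : Set I)) ∧ ‖z - g‖ < δ := by
    intro S g hg δ hδ
    have hg' : g ∈ closure (Submodule.span ℝ (f '' S) : Set H) := hg
    obtain ⟨z, hz, hdist⟩ := Metric.mem_closure_iff.mp hg' δ hδ
    obtain ⟨nn, c, v, hvz⟩ := Submodule.mem_span_set'.mp hz
    have hvv : ∀ j : Fin nn, ∃ i : I, i ∈ S ∧ f i = (v j : H) := by
      intro j
      obtain ⟨i, hi, hfi⟩ := (v j).2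
      exact ⟨i, hi, hfi⟩
    choose ψ hψS hψf using hvv
    refine ⟨Finset.image ψ Finset.univ, z, ?_, ?_, ?_⟩
    · intro i hi
      obtain ⟨j, _, rfl⟩ := Finset.mem_image.mp hi
      exact hψS j
    · rw [← hvz]
      refine Submodule.sum_mem _ (fun j _ => Submodule.smul_mem _ _ (Submodule.subset_span ?_))
      exact ⟨ψ j, Finset.mem_coe.mpr (Finset.mem_image.mpr ⟨j, Finset.mem_univ j, rfl⟩), hψf j⟩
    · rwa [← dist_eq_norm, dist_comm]
  -- the key step: one stage of the recursive construction
  have key : ∀ (n : ℕ) (F : Finset I) (ys : ℕ → H), ∃ (F' : Finset I) (y : H),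
      F ⊆ F' ∧ (∀ m, m < n → ∑ i ∈ F' \ F, q (ys m) i ≤ (2⁻¹ : ℝ) ^ (n+1)) ∧
      y ∈ Submodule.span ℝ (f '' (F' : Set I)) ∧ (2⁻¹ : ℝ) ≤ ‖y‖ ∧
      ∑ i ∈ F', q y i ≤ 4 * (2⁻¹ : ℝ) ^ (n+1) := by
    intro n F ys
    set ε : ℝ := (2⁻¹ : ℝ) ^ (n+1) with hε
    have hεpos : 0 < ε := by positivity
    have hEm : ∀ m : ℕ, ∃ Em : Finset I, ∑' i : {i // i ∉ Em}, q (ys m) ↑i < ε :=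
      fun m => tail (ys m) ε hεpos
    choose Em hEm2 using hEm
    set E : Finset I := (Finset.range n).biUnion Em with hEdef
    have hEtail : ∀ m, m < n → ∀ s : Finset I, (∀ i ∈ s, i ∉ E) → ∑ i ∈ s, q (ys m) i ≤ ε := by
      intro m hm s hs
      have h1 : ∀ i ∈ s, i ∈ {i : I | i ∉ Em m} := by
        intro i hi hmem
        exact hs i hi (Finset.mem_biUnion.mpr ⟨m, Finset.mem_range.mpr hm, hmem⟩)
      calc ∑ i ∈ s, q (ys m) i
          = ∑ i ∈ s, ({i : I | i ∉ Em m}).indicator (q (ys m)) i :=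
            Finset.sum_congr rfl (fun i hi => (Set.indicator_of_mem (h1 i hi) _).symm)
        _ ≤ ∑' i, ({i : I | i ∉ Em m}).indicator (q (ys m)) i :=
            Summable.sum_le_tsum s (fun i _ => Set.indicator_nonneg (fun j _ => hq0 _ j) i)
              ((hsum _).indicator _)
        _ = ∑' i : {i : I | i ∉ Em m}, q (ys m) ↑i := (tsum_subtype {i : I | i ∉ Em m} (q (ys m))).symm
        _ ≤ ε := le_of_lt (hEm2 m)
    obtain ⟨Γ, hΓ, x, hxmem, hxsum⟩ := hcon ε hεpos F (F ∪ E) Finset.subset_union_left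
    have htsnn : (0:ℝ) ≤ ∑' i : ((F : Set I) ∪ Γ : Set I), (inner ℝ x (f (i : I)) : ℝ) ^ 2 :=
      tsum_nonneg (fun i => sq_nonneg _)
    have hx2 : 0 < ε * ‖x‖ ^ 2 := lt_of_le_of_lt htsnn hxsum
    have hxne : ‖x‖ ≠ 0 := by
      intro h
      rw [h] at hx2
      simp at hx2
    have hnorm : 0 < ‖x‖ := lt_of_le_of_ne (norm_nonneg x) (Ne.symm hxne)
    have hx0 : x ≠ 0 := norm_pos_iff.mp hnorm
    set g : H := ‖x‖⁻¹ • x with hgdef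
    have hg1 : ‖g‖ = 1 := norm_smul_inv_norm hx0
    have hgmem : g ∈ (Submodule.span ℝ (f '' ((F : Set I) ∪ Γ))).topologicalClosure :=
      Submodule.smul_mem _ _ hxmem
    have hgsum : ∑' i : ((F : Set I) ∪ Γ : Set I), q g ↑i < ε := by
      have hrw : ∀ i : ((F : Set I) ∪ Γ : Set I), q g ↑i = (‖x‖⁻¹)^2 * q x ↑i := by
        intro i
        simp only [hq, hgdef, real_inner_smul_left]
        ring
      have hpos2 : (0:ℝ) < (‖x‖⁻¹)^2 := pow_pos (inv_pos.mpr hnorm) 2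
      calc ∑' i : ((F : Set I) ∪ Γ : Set I), q g ↑i
          = ∑' i : ((F : Set I) ∪ Γ : Set I), (‖x‖⁻¹)^2 * q x ↑i := tsum_congr hrw
        _ = (‖x‖⁻¹)^2 * ∑' i : ((F : Set I) ∪ Γ : Set I), q x ↑i := tsum_mul_left
        _ < (‖x‖⁻¹)^2 * (ε * ‖x‖ ^ 2) := by
            exact mul_lt_mul_of_pos_left hxsum hpos2
        _ = ε := by field_simp
    set δ : ℝ := min 2⁻¹ (Real.sqrt (ε / B)) with hδdef
    have hδpos : 0 < δ := lt_min (by norm_num) (Real.sqrt_pos.mpr (by positivity))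
    obtain ⟨T, z, hTS, hzspan, hdist⟩ := approx _ g hgmem δ hδpos
    refine ⟨F ∪ T, z, Finset.subset_union_left, ?_, ?_, ?_, ?_⟩
    · -- mass of earlier vectors on the new indices is small
      intro m hm
      apply hEtail m hm
      intro i hi
      rw [Finset.mem_sdiff] at hi
      obtain ⟨hiFT, hiF⟩ := hi
      have hiT : i ∈ T := by
        rcases Finset.mem_union.mp hiFT with h | h
        · exact absurd h hiF
        · exact h
      have : (i : I) ∈ (F : Set I) ∪ Γ := hTS hiT
      rcases this with h | h
      · exact absurd h hiF
      · intro hiE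
        exact (hΓ h) (Finset.mem_union.mpr (Or.inr hiE))
    · -- z in the span of the new finite family
      refine Submodule.span_mono (Set.image_mono ?_) hzspan
      intro i hi
      exact Finset.mem_coe.mpr (Finset.mem_union.mpr (Or.inr (Finset.mem_coe.mp hi)))
    · -- norm bounded below
      have h1 : ‖g‖ - ‖z‖ ≤ ‖g - z‖ := norm_sub_norm_le g z
      have h2 : ‖g - z‖ = ‖z - g‖ := norm_sub_rev g z
      have h3 : δ ≤ 2⁻¹ := min_le_left _ _
      rw [hg1] at h1
      linarith [hdist]
    · -- small mass of the new vector on its own index set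
      have hpt : ∀ i : I, q z i ≤ 2 * q g i + 2 * q (z - g) i := by
        intro i
        have hzi : (inner ℝ z (f i) : ℝ) = inner ℝ g (f i) + inner ℝ (z - g) (f i) := by
          rw [← inner_add_left]
          congr 1
          abel
        simp only [hq]
        rw [hzi]
        nlinarith [sq_nonneg ((inner ℝ g (f i) : ℝ) - inner ℝ (z - g) (f i))]
      have hsubset : ((F ∪ T : Finset I) : Set I) ⊆ (F : Set I) ∪ Γ := by
        intro i hi
        rcases Finset.mem_union.mp (Finset.mem_coe.mp hi) with h | h
        · exact Or.inl (Finset.mem_coe.mpr h)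
        · exact hTS (Finset.mem_coe.mpr h)
      have h5a : ∑ i ∈ F ∪ T, q g i ≤ ε :=
        le_trans (hsub_tsum g _ (F ∪ T) hsubset) (le_of_lt hgsum)
      have h5b : ∑ i ∈ F ∪ T, q (z - g) i ≤ ε := by
        have hd1 : ‖z - g‖ ^ 2 ≤ δ ^ 2 :=
          pow_le_pow_left₀ (norm_nonneg _) (le_of_lt hdist) 2
        have hd2 : δ ^ 2 ≤ ε / B := by
          have : δ ≤ Real.sqrt (ε / B) := min_le_right _ _
          calc δ ^ 2 ≤ (Real.sqrt (ε / B)) ^ 2 := pow_le_pow_left₀ (le_of_lt hδpos) this 2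
            _ = ε / B := Real.sq_sqrt (by positivity)
        calc ∑ i ∈ F ∪ T, q (z - g) i ≤ B * ‖z - g‖ ^ 2 := hfin _ _
          _ ≤ B * (ε / B) := by nlinarith
          _ = ε := by field_simp
      calc ∑ i ∈ F ∪ T, q z i
          ≤ ∑ i ∈ F ∪ T, (2 * q g i + 2 * q (z - g) i) :=
            Finset.sum_le_sum (fun i _ => hpt i)
        _ = 2 * ∑ i ∈ F ∪ T, q g i + 2 * ∑ i ∈ F ∪ T, q (z - g) i := by
            rw [Finset.sum_add_distrib, Finset.mul_sum, Finset.mul_sum]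
        _ ≤ 2 * ε + 2 * ε := by
            have := mul_le_mul_of_nonneg_left h5a (by norm_num : (0:ℝ) ≤ 2)
            have := mul_le_mul_of_nonneg_left h5b (by norm_num : (0:ℝ) ≤ 2)
            linarith
        _ = 4 * ε := by ring
  -- package the step as a function on states
  have key2 : ∀ s : ℕ × Finset I × (ℕ → H), ∃ t : ℕ × Finset I × (ℕ → H),
      t.1 = s.1 + 1 ∧ s.2.1 ⊆ t.2.1 ∧ (∀ m, m ≠ s.1 → t.2.2 m = s.2.2 m) ∧
      (∀ m, m < s.1 → ∑ i ∈ t.2.1 \ s.2.1, q (s.2.2 m) i ≤ (2⁻¹:ℝ) ^ (s.1+1)) ∧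
      t.2.2 s.1 ∈ Submodule.span ℝ (f '' (t.2.1 : Set I)) ∧ (2⁻¹:ℝ) ≤ ‖t.2.2 s.1‖ ∧
      ∑ i ∈ t.2.1, q (t.2.2 s.1) i ≤ 4 * (2⁻¹:ℝ) ^ (s.1+1) := by
    rintro ⟨n, F, ys⟩
    obtain ⟨F', y, h1, h2, h3, h4, h5⟩ := key n F ys
    refine ⟨⟨n+1, F', Function.update ys n y⟩, rfl, h1, ?_, h2, ?_, ?_, ?_⟩
    · intro m hm; exact Function.update_of_ne hm y ys
    · simpa using h3
    · simpa using h4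
    · simpa using h5
  choose step hstep using key2
  set seq : ℕ → ℕ × Finset I × (ℕ → H) := fun k => step^[k] (0, ∅, fun _ => 0) with hseqdef
  have hiter : ∀ k, seq (k+1) = step (seq k) := fun k => Function.iterate_succ_apply' step k _
  have hn : ∀ k, (seq k).1 = k := by
    intro k
    induction k with
    | zero => rfl
    | succ k ih => rw [hiter k, (hstep (seq k)).1, ih]
  set G : ℕ → Finset I := fun k => (seq k).2.1 with hGdef
  set Y : ℕ → H := fun n => (seq (n+1)).2.2 n with hYdef
  have mono : ∀ k, G k ⊆ G (k+1) := by
    intro k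
    have := (hstep (seq k)).2.1
    rw [← hiter k] at this
    exact this
  have monole : ∀ k l, k ≤ l → G k ⊆ G l := by
    intro k l hkl
    induction l, hkl using Nat.le_induction with
    | base => exact fun i hi => hi
    | succ l hkl ih => exact fun i hi => mono l (ih hi)
  have stab : ∀ k n, n < k → (seq k).2.2 n = Y n := by
    intro k
    induction k with
    | zero => intro n hn'; omega
    | succ k ih =>
      intro n hn'
      rcases Nat.lt_succ_iff_lt_or_eq.mp hn' with h | h
      · have hne : n ≠ (seq k).1 := by rw [hn k]; omega
        have := (hstep (seq k)).2.2.1 n hne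
        rw [← hiter k] at this
        rw [this]
        exact ih n h
      · subst h; rfl
  have hYmem : ∀ n, Y n ∈ Submodule.span ℝ (f '' (G (n+1) : Set I)) := by
    intro n
    have h := (hstep (seq n)).2.2.2.2.1
    rw [hn n, ← hiter n] at h
    exact h
  have hYnorm : ∀ n, (2⁻¹:ℝ) ≤ ‖Y n‖ := by
    intro n
    have h := (hstep (seq n)).2.2.2.2.2.1
    rw [hn n, ← hiter n] at h
    exact h
  have hbase : ∀ n, ∑ i ∈ G (n+1), q (Y n) i ≤ 4 * (2⁻¹:ℝ) ^ (n+1) := by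
    intro n
    have h := (hstep (seq n)).2.2.2.2.2.2
    rw [hn n, ← hiter n] at h
    exact h
  have hincr : ∀ n k, n < k → ∑ i ∈ G (k+1) \ G k, q (Y n) i ≤ (2⁻¹:ℝ) ^ (k+1) := by
    intro n k hnk
    have h := (hstep (seq k)).2.2.2.1 n (by rw [hn k]; exact hnk)
    rw [hn k, ← hiter k, stab k n hnk] at h
    exact h
  have hbound : ∀ n k, n + 1 ≤ k → ∑ i ∈ G k, q (Y n) i ≤ 8 * (2⁻¹:ℝ) ^ (n+1) - (2⁻¹:ℝ) ^ k := by
    intro n k hk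
    induction k with
    | zero => omega
    | succ k ih =>
      rcases Nat.lt_succ_iff_lt_or_eq.mp (Nat.lt_succ_of_le hk) with h | h
      · -- n + 1 ≤ k : inductive step
        have hnk : n < k := by omega
        have h1 := ih (by omega)
        have h2 := hincr n k hnk
        have h3 : ∑ i ∈ G (k+1) \ G k, q (Y n) i + ∑ i ∈ G k, q (Y n) i
            = ∑ i ∈ G (k+1), q (Y n) i := Finset.sum_sdiff (mono k)
        have h4 : (2⁻¹:ℝ) ^ (k+1) = (2⁻¹:ℝ) ^ k * 2⁻¹ := pow_succ _ _
        linarith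
      · -- base case k + 1 = n + 1
        have hkn : k = n := by omega
        subst hkn
        have h1 := hbase k
        have h2 : (0:ℝ) < (2⁻¹:ℝ) ^ (k+1) := by positivity
        linarith
  -- the union of all index sets
  set Λ : Set I := ⋃ k, ((G k : Finset I) : Set I) with hΛdef
  obtain ⟨A', B', hA', hB', hΛ⟩ := hsub Λ
  have hYΛ : ∀ n, Y n ∈ (Submodule.span ℝ (f '' Λ)).topologicalClosure := by
    intro n
    have h1 : Submodule.span ℝ (f '' ((G (n+1) : Finset I) : Set I)) ≤ Submodule.span ℝ (f '' Λ) :=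
      Submodule.span_mono (Set.image_mono
        (Set.subset_iUnion (fun k => ((G k : Finset I) : Set I)) (n+1)))
    exact (Submodule.le_topologicalClosure _) (h1 (hYmem n))
  have cover : ∀ s : Finset I, (∀ i ∈ s, i ∈ Λ) → ∃ k, ∀ i ∈ s, i ∈ G k := by
    intro s
    induction s using Finset.induction_on with
    | empty => exact fun _ => ⟨0, by simp⟩
    | @insert a s ha ih =>
      intro h
      obtain ⟨k1, hk1⟩ := ih (fun i hi => h i (Finset.mem_insert_of_mem hi))
      have haΛ : a ∈ Λ := h a (Finset.mem_insert_self a s)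
      rw [hΛdef] at haΛ
      obtain ⟨sa, ⟨k2, hk2⟩, hsa⟩ := haΛ
      refine ⟨max k1 k2, fun i hi => ?_⟩
      rcases Finset.mem_insert.mp hi with rfl | hi
      · subst hk2
        exact monole k2 _ (le_max_right _ _) (Finset.mem_coe.mp hsa)
      · exact monole k1 _ (le_max_left _ _) (hk1 i hi)
  have hup2 : ∀ n, ∑' i : Λ, q (Y n) ↑i ≤ 8 * (2⁻¹:ℝ) ^ (n+1) := by
    intro n
    rw [tsum_subtype Λ (q (Y n))]
    apply tsum_le_of_sum_le' (by positivity)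
    intro s
    have hsplit : ∑ i ∈ s, Λ.indicator (q (Y n)) i = ∑ i ∈ s.filter (· ∈ Λ), q (Y n) i := by
      rw [Finset.sum_filter]
      refine Finset.sum_congr rfl (fun i _ => ?_)
      by_cases h : i ∈ Λ <;> simp [Set.indicator_apply, h]
    rw [hsplit]
    obtain ⟨k, hk⟩ := cover (s.filter (· ∈ Λ)) (fun i hi => (Finset.mem_filter.mp hi).2)
    have hle1 : ∑ i ∈ s.filter (· ∈ Λ), q (Y n) i ≤ ∑ i ∈ G (max k (n+1)), q (Y n) i :=
      Finset.sum_le_sum_of_subset_of_nonneg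
        (fun i hi => monole k _ (le_max_left _ _) (hk i hi))
        (fun i _ _ => hq0 _ i)
    have hle2 := hbound n (max k (n+1)) (le_max_right _ _)
    have hle3 : (0:ℝ) ≤ (2⁻¹:ℝ) ^ (max k (n+1)) := by positivity
    linarith
  -- derive the contradiction
  obtain ⟨n, hsmall⟩ := exists_pow_lt_of_lt_one
    (show (0:ℝ) < A' / 64 by positivity) (by norm_num : (2⁻¹:ℝ) < 1)
  have h1 := (hΛ (Y n) (hYΛ n)).1
  have h1' : A' * ‖Y n‖ ^ 2 ≤ ∑' i : Λ, q (Y n) ↑i := h1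
  have h2 := hup2 n
  have h3 := hYnorm n
  have h4 : A' * (2⁻¹ * 2⁻¹ : ℝ) ≤ A' * ‖Y n‖ ^ 2 := by
    have : (2⁻¹ * 2⁻¹ : ℝ) ≤ ‖Y n‖ ^ 2 := by nlinarith [norm_nonneg (Y n)]
    exact mul_le_mul_of_nonneg_left this (le_of_lt hA')
  have h5 : (8:ℝ) * (2⁻¹:ℝ) ^ (n+1) = 4 * (2⁻¹:ℝ) ^ n := by
    rw [pow_succ]
    ring
  nlinarith
end

section
/- Let {f_i}_{i∈I} be a family in a Hilbert space H, let J, J′ be finite subsets of I with J ⊆ J′, let ε > 0, and suppose that for every J″ ⊆ I∖J′ the family {f_i}_{i∈J∪J″} has lower frame bound ≥ ε for its closed linear span. Let P be the orthogonal projection of H onto span{f_i}_{i∈J}. Then for every J″ ⊆ I∖J′, the family {(I−P)f_i}_{i∈J″} has lower frame bound ≥ ε for its closed linear span, i.e., ε‖f‖² ≤ ∑_{i∈J″} |⟨f, (I−P)f_i⟩|² for all f in the closed linear span of {(I−P)f_i}_{i∈J″}. -/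
open scoped BigOperators

theorem stmt_4 {H : Type*} [NormedAddCommGroup H] [InnerProductSpace ℝ H]
    [CompleteSpace H]
    {I : Type*} (f : I → H) (J J' : Finset I) (hJJ' : J ⊆ J')
    (ε : ℝ) (hε : 0 < ε)
    -- for every `J'' ⊆ I \ J'`, the family `{f i}_{i ∈ J ∪ J''}` has lower frame
    -- bound `≥ ε` for its closed linear span
    (hlow : ∀ J'' : Set I, J'' ⊆ {i | i ∉ J'} →
      ∀ x ∈ (Submodule.span ℝ (f '' ((J : Set I) ∪ J''))).topologicalClosure,
        ε * ‖x‖ ^ 2 ≤ ∑' i : ((J : Set I) ∪ J'' : Set I), (inner ℝ x (f (i : I)) : ℝ) ^ 2) :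
    -- with `P` the orthogonal projection onto `span {f i}_{i ∈ J}`, for every
    -- `J'' ⊆ I \ J'` the family `{(1-P) f i}_{i ∈ J''}` has lower frame bound `≥ ε`
    -- for its closed linear span
    ∀ J'' : Set I, J'' ⊆ {i | i ∉ J'} →
      haveI : FiniteDimensional ℝ (Submodule.span ℝ (f '' (J : Set I))) :=
        FiniteDimensional.span_of_finite ℝ ((J : Set I).toFinite.image f)
      ∀ x ∈ (Submodule.span ℝ
          ((fun i => f i - (Submodule.orthogonalProjectionOnto (Submodule.span ℝ (f '' (J : Set I))) (f i) : H))
            '' J'')).topologicalClosure,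
        ε * ‖x‖ ^ 2 ≤ ∑' i : J'',
          (inner ℝ x (f (i : I) -
            (Submodule.orthogonalProjectionOnto (Submodule.span ℝ (f '' (J : Set I))) (f (i : I)) : H)) : ℝ) ^ 2 := by
  intro J'' hJ''
  haveI : FiniteDimensional ℝ (Submodule.span ℝ (f '' (J : Set I))) :=
    FiniteDimensional.span_of_finite ℝ ((J : Set I).toFinite.image f)
  set K := Submodule.span ℝ (f '' (J : Set I)) with hKdef
  intro x hx
  -- each generator lies in Kᗮ
  have hsub : ∀ i : I, f i - (Submodule.orthogonalProjectionOnto K (f i) : H) ∈ Kᗮ := fun i =>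
    K.sub_starProjection_mem_orthogonal (f i)
  -- hence x ∈ Kᗮ
  have hxK : x ∈ Kᗮ := by
    have h1 : Submodule.span ℝ
        ((fun i => f i - (Submodule.orthogonalProjectionOnto K (f i) : H)) '' J'') ≤ Kᗮ := by
      rw [Submodule.span_le]
      rintro _ ⟨i, _, rfl⟩
      exact hsub i
    exact Submodule.topologicalClosure_minimal _ h1 K.isClosed_orthogonal hx
  have hinner0 : ∀ v ∈ K, (inner ℝ x v : ℝ) = 0 := fun v hv => by
    rw [real_inner_comm]
    exact (Submodule.mem_orthogonal K x).1 hxK v hv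
  -- x lies in the closure of span f(J ∪ J'')
  have hx2 : x ∈ (Submodule.span ℝ (f '' ((J : Set I) ∪ J''))).topologicalClosure := by
    have hle : Submodule.span ℝ
        ((fun i => f i - (Submodule.orthogonalProjectionOnto K (f i) : H)) '' J'') ≤
        Submodule.span ℝ (f '' ((J : Set I) ∪ J'')) := by
      rw [Submodule.span_le]
      rintro _ ⟨i, hi, rfl⟩
      have h1 : f i ∈ Submodule.span ℝ (f '' ((J : Set I) ∪ J'')) :=
        Submodule.subset_span ⟨i, Or.inr hi, rfl⟩
      have h2 : (Submodule.orthogonalProjectionOnto K (f i) : H) ∈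
          Submodule.span ℝ (f '' ((J : Set I) ∪ J'')) := by
        have hK : K ≤ Submodule.span ℝ (f '' ((J : Set I) ∪ J'')) := by
          rw [hKdef]
          exact Submodule.span_mono (Set.image_mono (f := f) Set.subset_union_left)
        exact hK (Submodule.coe_mem _)
      exact Submodule.sub_mem _ h1 h2
    exact Submodule.topologicalClosure_mono hle hx
  have hmain := hlow J'' hJ'' x hx2
  -- the sum over J ∪ J'' equals the sum over J''
  have hgJ : ∀ i ∈ (J : Set I), ((inner ℝ x (f i) : ℝ)) ^ 2 = 0 := fun i hi => by
    rw [hinner0 (f i) (Submodule.subset_span ⟨i, hi, rfl⟩)]; ring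
  have hsum : (∑' i : ((J : Set I) ∪ J'' : Set I), (inner ℝ x (f (i : I)) : ℝ) ^ 2)
      = ∑' i : J'', (inner ℝ x (f (i : I)) : ℝ) ^ 2 := by
    rw [tsum_subtype ((J : Set I) ∪ J'') (fun i => (inner ℝ x (f i) : ℝ) ^ 2),
      tsum_subtype J'' (fun i => (inner ℝ x (f i) : ℝ) ^ 2)]
    apply tsum_congr
    intro i
    by_cases hi : i ∈ J''
    · simp [Set.indicator_apply, Set.mem_union, hi]
    · by_cases hiJ : i ∈ (J : Set I)
      · simp [Set.indicator_apply, Set.mem_union, hi, hiJ, hgJ i hiJ]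
      · simp [Set.indicator_apply, Set.mem_union, hi, hiJ]
  have hsum2 : (∑' i : J'', (inner ℝ x (f (i : I)) : ℝ) ^ 2)
      = ∑' i : J'', (inner ℝ x (f (i : I) -
          (Submodule.orthogonalProjectionOnto K (f (i : I)) : H)) : ℝ) ^ 2 := by
    apply tsum_congr
    intro i
    rw [inner_sub_right, hinner0 _ (Submodule.coe_mem _), sub_zero]
  calc ε * ‖x‖ ^ 2 ≤ _ := hmain
    _ = _ := by rw [hsum, hsum2]
end

section
/- Let {f_i}_{i∈I} be a family in a separable Hilbert space H. Then {f_i}_{i∈I} is a Riesz basis for H if and only if {f_i}_{i∈I} is a frame for H and is ω-independent, i.e., whenever ∑_{i∈I} c_i f_i = 0 for a scalar sequence {c_i}, then c_i = 0 for all i. -/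
open scoped BigOperators

noncomputable section RieszAuxSection

namespace RieszAux

open scoped ENNReal

variable {H : Type*} [NormedAddCommGroup H] [InnerProductSpace ℝ H]
variable {I : Type*}

local notation "E" => lp (fun _ : I => ℝ) 2

lemma eq_zero_of_mul_norm_sq_nonpos {A : ℝ} (hA : 0 < A) {x : H}
    (h : A * ‖x‖ ^ 2 ≤ 0) : x = 0 := by
  have h2 : ‖x‖ ^ 2 ≤ 0 := by nlinarith
  have h3 : ‖x‖ ^ 2 = 0 := le_antisymm h2 (sq_nonneg _)
  have h4 : ‖x‖ = 0 := pow_eq_zero_iff two_ne_zero |>.mp h3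
  exact norm_eq_zero.mp h4

lemma hasSum_sq_norm (a : E) : HasSum (fun i => (a i : ℝ) ^ 2) (‖a‖ ^ 2) := by
  have h := lp.hasSum_inner (𝕜 := ℝ) a a
  have h2 : (inner ℝ a a : ℝ) = ‖a‖ ^ 2 := real_inner_self_eq_norm_sq a
  rw [h2] at h
  convert h using 2 with i
  · rfl
  · rw [real_inner_self_eq_norm_sq, Real.norm_eq_abs, sq_abs]

lemma summable_smul_of_upper {C : ℝ} {f : I → H} [CompleteSpace H] (hC0 : 0 ≤ C)
    (hC : ∀ (s : Finset I) (a : I → ℝ),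
      ‖∑ i ∈ s, a i • f i‖ ^ 2 ≤ C * ∑ i ∈ s, (a i) ^ 2)
    (a : E) : Summable (fun i => (a i : ℝ) • f i) := by
  rw [summable_iff_vanishing_norm]
  intro ε hε
  have hsq : Summable (fun i => (a i : ℝ) ^ 2) := (hasSum_sq_norm a).summable
  obtain ⟨s, hs⟩ := summable_iff_vanishing_norm.1 hsq (ε ^ 2 / (C + 1))
    (by positivity)
  refine ⟨s, fun t ht => ?_⟩
  have h1 := hC t a
  have h2 := hs t ht
  have h3 : 0 ≤ ∑ i ∈ t, (a i : ℝ) ^ 2 :=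
    Finset.sum_nonneg fun i _ => sq_nonneg _
  rw [Real.norm_eq_abs, abs_of_nonneg h3] at h2
  have h4 : ‖∑ i ∈ t, (a i : ℝ) • f i‖ ^ 2 < ε ^ 2 := by
    have hCε : C * ∑ i ∈ t, (a i : ℝ) ^ 2 < ε ^ 2 := by
      rcases le_or_gt C 0 with hc | hc
      · nlinarith
      · calc C * ∑ i ∈ t, (a i : ℝ) ^ 2 < C * (ε ^ 2 / (C + 1)) :=
              mul_lt_mul_of_pos_left h2 hc
          _ ≤ ε ^ 2 := by
              rw [mul_div_assoc', div_le_iff₀ (by positivity)]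
              nlinarith
    linarith
  nlinarith [norm_nonneg (∑ i ∈ t, (a i : ℝ) • f i), hε]

lemma exists_T {C : ℝ} {f : I → H} [CompleteSpace H] (hC0 : 0 ≤ C)
    (hC : ∀ (s : Finset I) (a : I → ℝ),
      ‖∑ i ∈ s, a i • f i‖ ^ 2 ≤ C * ∑ i ∈ s, (a i) ^ 2) :
    ∃ T : E →L[ℝ] H, ∀ a : E, HasSum (fun i => (a i : ℝ) • f i) (T a) := by
  have hsum : ∀ a : E, Summable (fun i => (a i : ℝ) • f i) :=
    summable_smul_of_upper hC0 hC
  let L : E →ₗ[ℝ] H :=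
    { toFun := fun a => ∑' i, (a i : ℝ) • f i
      map_add' := fun a b => by
        have h : HasSum (fun i => ((a + b : E) i : ℝ) • f i)
            ((∑' i, (a i : ℝ) • f i) + ∑' i, (b i : ℝ) • f i) := by
          have := ((hsum a).hasSum.add (hsum b).hasSum)
          convert this using 1
          funext i
          rw [lp.coeFn_add]
          simp [add_smul]
        exact h.tsum_eq
      map_smul' := fun c a => by
        have h : HasSum (fun i => ((c • a : E) i : ℝ) • f i)
            (c • ∑' i, (a i : ℝ) • f i) := by
          have := (hsum a).hasSum.const_smul c
          convert this using 1
          funext i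
          rw [lp.coeFn_smul]
          simp [smul_smul]
        exact h.tsum_eq }
  have hLa : ∀ a : E, HasSum (fun i => (a i : ℝ) • f i) (L a) :=
    fun a => (hsum a).hasSum
  have hbound : ∀ a : E, ‖L a‖ ≤ Real.sqrt C * ‖a‖ := by
    intro a
    have hkey : ‖L a‖ ^ 2 ≤ C * ‖a‖ ^ 2 := by
      have ht : Filter.Tendsto (fun s : Finset I => ‖∑ i ∈ s, (a i : ℝ) • f i‖ ^ 2)
          Filter.atTop (nhds (‖L a‖ ^ 2)) := ((hLa a).norm.pow 2)
      refine le_of_tendsto ht (Filter.Eventually.of_forall fun s => ?_)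
      refine (hC s a).trans ?_
      have : ∑ i ∈ s, (a i : ℝ) ^ 2 ≤ ‖a‖ ^ 2 :=
        sum_le_hasSum s (fun i _ => sq_nonneg _) (hasSum_sq_norm a)
      nlinarith
    calc ‖L a‖ = Real.sqrt (‖L a‖ ^ 2) := (Real.sqrt_sq (norm_nonneg _)).symm
      _ ≤ Real.sqrt (C * ‖a‖ ^ 2) := Real.sqrt_le_sqrt hkey
      _ = Real.sqrt C * ‖a‖ := by
          rw [Real.sqrt_mul hC0, Real.sqrt_sq (norm_nonneg _)]
  exact ⟨L.mkContinuous (Real.sqrt C) hbound, hLa⟩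

lemma exists_U {K : ℝ} {f : I → H} (hK0 : 0 ≤ K)
    (hK : ∀ (x : H) (s : Finset I), ∑ i ∈ s, (inner ℝ x (f i) : ℝ) ^ 2 ≤ K * ‖x‖ ^ 2) :
    ∃ U : H →L[ℝ] E, ∀ (x : H) (i : I), (U x : ∀ _ : I, ℝ) i = (inner ℝ x (f i) : ℝ) := by
  have hmem : ∀ x : H, Memℓp (fun i => (inner ℝ x (f i) : ℝ)) 2 := by
    intro x
    apply memℓp_gen' (C := K * ‖x‖ ^ 2)
    intro s
    refine le_trans (le_of_eq ?_) (hK x s)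
    refine Finset.sum_congr rfl fun i _ => ?_
    have h2 : ((2 : ℝ≥0∞).toReal) = (2 : ℝ) := by simp
    rw [h2, Real.rpow_two, Real.norm_eq_abs, sq_abs]
  let L : H →ₗ[ℝ] E :=
    { toFun := fun x => ⟨fun i => (inner ℝ x (f i) : ℝ), hmem x⟩
      map_add' := fun x y => by
        apply lp.ext
        rw [lp.coeFn_add]
        funext i
        exact inner_add_left x y (f i)
      map_smul' := fun c x => by
        apply lp.ext
        rw [lp.coeFn_smul]
        funext i
        exact real_inner_smul_left x (f i) c }
  have hLx : ∀ (x : H) (i : I), (L x : ∀ _ : I, ℝ) i = (inner ℝ x (f i) : ℝ) :=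
    fun x i => rfl
  have hbound : ∀ x : H, ‖L x‖ ≤ Real.sqrt K * ‖x‖ := by
    intro x
    have h1 : HasSum (fun i => (inner ℝ x (f i) : ℝ) ^ 2) (‖L x‖ ^ 2) := by
      have := hasSum_sq_norm (L x)
      simpa [hLx] using this
    have hkey : ‖L x‖ ^ 2 ≤ K * ‖x‖ ^ 2 :=
      le_of_tendsto h1 (Filter.Eventually.of_forall fun s => hK x s)
    calc ‖L x‖ = Real.sqrt (‖L x‖ ^ 2) := (Real.sqrt_sq (norm_nonneg _)).symm
      _ ≤ Real.sqrt (K * ‖x‖ ^ 2) := Real.sqrt_le_sqrt hkey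
      _ = Real.sqrt K * ‖x‖ := by
          rw [Real.sqrt_mul hK0, Real.sqrt_sq (norm_nonneg _)]
  exact ⟨L.mkContinuous (Real.sqrt K) hbound, fun x i => rfl⟩

lemma hasSum_inner_T {f : I → H} {T : E →L[ℝ] H}
    (hT : ∀ a : E, HasSum (fun i => (a i : ℝ) • f i) (T a)) (a : E) (x : H) :
    HasSum (fun i => (a i : ℝ) * (inner ℝ x (f i) : ℝ)) (inner ℝ x (T a) : ℝ) := by
  have := (hT a).mapL (innerSL ℝ x)
  simpa [real_inner_smul_right] using this

lemma finsupp_apply [DecidableEq I] (s : Finset I) (a : I → ℝ) (j : I) :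
    ((∑ i ∈ s, lp.single 2 i (a i) : E) : ∀ _ : I, ℝ) j = if j ∈ s then a j else 0 := by
  rw [lp.coeFn_sum, Finset.sum_apply]
  simp only [lp.single_apply, Pi.single_apply, Finset.sum_ite_eq]

lemma norm_sq_finsupp [DecidableEq I] (s : Finset I) (a : I → ℝ) :
    ‖(∑ i ∈ s, lp.single 2 i (a i) : E)‖ ^ 2 = ∑ i ∈ s, (a i) ^ 2 := by
  have h1 := hasSum_sq_norm (∑ i ∈ s, lp.single 2 i (a i) : E)
  have h3 : ∀ j ∉ s, (((∑ i ∈ s, lp.single 2 i (a i) : E) : ∀ _ : I, ℝ) j) ^ 2 = 0 := by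
    intro j hj
    rw [finsupp_apply, if_neg hj]
    simp
  have h4 := hasSum_sum_of_ne_finset_zero (L := SummationFilter.unconditional I) h3
  have h5 : ∑ j ∈ s, (((∑ i ∈ s, lp.single 2 i (a i) : E) : ∀ _ : I, ℝ) j) ^ 2
      = ∑ j ∈ s, (a j) ^ 2 :=
    Finset.sum_congr rfl fun j hj => by rw [finsupp_apply, if_pos hj]
  rw [← h5]
  exact h1.unique h4

lemma T_finsupp [DecidableEq I] {f : I → H} {T : E →L[ℝ] H}
    (hT : ∀ a : E, HasSum (fun i => (a i : ℝ) • f i) (T a)) (s : Finset I) (a : I → ℝ) :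
    T (∑ i ∈ s, lp.single 2 i (a i) : E) = ∑ i ∈ s, a i • f i := by
  have h1 := hT (∑ i ∈ s, lp.single 2 i (a i) : E)
  have h3 : ∀ j ∉ s, (((∑ i ∈ s, lp.single 2 i (a i) : E) : ∀ _ : I, ℝ) j) • f j = 0 := by
    intro j hj
    rw [finsupp_apply, if_neg hj, zero_smul]
  have h4 := hasSum_sum_of_ne_finset_zero (L := SummationFilter.unconditional I) h3
  have h5 : ∑ j ∈ s, (((∑ i ∈ s, lp.single 2 i (a i) : E) : ∀ _ : I, ℝ) j) • f j
      = ∑ j ∈ s, a j • f j :=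
    Finset.sum_congr rfl fun j hj => by rw [finsupp_apply, if_pos hj]
  rw [← h5]
  exact h1.unique h4

end RieszAux

end RieszAuxSection

set_option maxHeartbeats 1000000 in
theorem stmt_14 {H : Type*} [NormedAddCommGroup H] [InnerProductSpace ℝ H]
    [CompleteSpace H] [TopologicalSpace.SeparableSpace H]
    {I : Type*} (f : I → H) :
    IsRieszBasis f ↔
      -- `f` is a frame for `H` ...
      ((∃ A B : ℝ, 0 < A ∧ 0 < B ∧ ∀ x : H,
        A * ‖x‖ ^ 2 ≤ ∑' i, (inner ℝ x (f i) : ℝ) ^ 2 ∧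
        ∑' i, (inner ℝ x (f i) : ℝ) ^ 2 ≤ B * ‖x‖ ^ 2) ∧
      -- ... and `f` is ω-independent
      (∀ c : I → ℝ, HasSum (fun i => c i • f i) 0 → ∀ i, c i = 0)) := by
  classical
  constructor
  · rintro ⟨hdense, c, C, hc, hC, hbd⟩
    have hup : ∀ (s : Finset I) (a : I → ℝ),
        ‖∑ i ∈ s, a i • f i‖ ^ 2 ≤ C * ∑ i ∈ s, (a i) ^ 2 := fun s a => (hbd s a).2
    have hlow : ∀ (s : Finset I) (a : I → ℝ),
        c * ∑ i ∈ s, (a i) ^ 2 ≤ ‖∑ i ∈ s, a i • f i‖ ^ 2 := fun s a => (hbd s a).1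
    -- finite frame upper bound by Cauchy-Schwarz
    have hfin : ∀ (x : H) (s : Finset I),
        ∑ i ∈ s, (inner ℝ x (f i) : ℝ) ^ 2 ≤ C * ‖x‖ ^ 2 := by
      intro x s
      set t := ∑ i ∈ s, (inner ℝ x (f i) : ℝ) ^ 2 with ht
      have ht0 : 0 ≤ t := Finset.sum_nonneg fun i _ => sq_nonneg _
      set u := ‖∑ i ∈ s, (inner ℝ x (f i) : ℝ) • f i‖ with hu
      have hu0 : 0 ≤ u := norm_nonneg _
      have h1 : t = (inner ℝ x (∑ i ∈ s, (inner ℝ x (f i) : ℝ) • f i) : ℝ) := by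
        rw [inner_sum, ht]
        refine Finset.sum_congr rfl fun i _ => ?_
        rw [real_inner_smul_right]; ring
      have h2 : t ≤ ‖x‖ * u := by
        rw [h1, hu]; exact real_inner_le_norm _ _
      have h3 : u ^ 2 ≤ C * t := hup s _
      rcases eq_or_lt_of_le ht0 with h | h
      · rw [← h]
        exact mul_nonneg hC.le (sq_nonneg _)
      · have h4 : t * t ≤ (‖x‖ * u) * (‖x‖ * u) :=
          mul_le_mul h2 h2 ht0 (mul_nonneg (norm_nonneg _) hu0)
        have h5 : (‖x‖ * u) * (‖x‖ * u) ≤ ‖x‖ ^ 2 * (C * t) := by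
          have := mul_le_mul_of_nonneg_left h3 (sq_nonneg ‖x‖)
          nlinarith [sq_nonneg ‖x‖]
        have h6 : t * t ≤ (C * ‖x‖ ^ 2) * t := by nlinarith
        exact le_of_mul_le_mul_right h6 h
    have hsummable : ∀ x : H, Summable (fun i => (inner ℝ x (f i) : ℝ) ^ 2) :=
      fun x => summable_of_sum_le (fun i => sq_nonneg _) (hfin x)
    have hupper : ∀ x : H, ∑' i, (inner ℝ x (f i) : ℝ) ^ 2 ≤ C * ‖x‖ ^ 2 :=
      fun x => le_of_tendsto (hsummable x).hasSum
        (Filter.Eventually.of_forall fun s => hfin x s)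
    obtain ⟨T, hT⟩ := RieszAux.exists_T hC.le hup
    obtain ⟨U, hU⟩ := RieszAux.exists_U hC.le hfin
    -- T is bounded below
    have hTlow : ∀ a : lp (fun _ : I => ℝ) 2, c * ‖a‖ ^ 2 ≤ ‖T a‖ ^ 2 := by
      intro a
      have t0 : Filter.Tendsto (fun s : Finset I => ∑ i ∈ s, lp.single 2 i (a i))
          Filter.atTop (nhds a) := lp.hasSum_single (by norm_num) a
      have t1 : Filter.Tendsto
          (fun s : Finset I => c * ‖∑ i ∈ s, lp.single 2 i (a i)‖ ^ 2)
          Filter.atTop (nhds (c * ‖a‖ ^ 2)) := (t0.norm.pow 2).const_mul c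
      have t2 : Filter.Tendsto
          (fun s : Finset I => ‖T (∑ i ∈ s, lp.single 2 i (a i))‖ ^ 2)
          Filter.atTop (nhds (‖T a‖ ^ 2)) :=
        (((T.continuous.tendsto a).comp t0).norm.pow 2)
      refine le_of_tendsto_of_tendsto' t1 t2 fun s => ?_
      rw [RieszAux.norm_sq_finsupp, RieszAux.T_finsupp hT]
      exact hlow s a
    have hsc : 0 < Real.sqrt c := Real.sqrt_pos.2 hc
    have hTanti : ∀ a : lp (fun _ : I => ℝ) 2, Real.sqrt c * ‖a‖ ≤ ‖T a‖ := by
      intro a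
      calc Real.sqrt c * ‖a‖ = Real.sqrt (c * ‖a‖ ^ 2) := by
            rw [Real.sqrt_mul hc.le, Real.sqrt_sq (norm_nonneg _)]
        _ ≤ Real.sqrt (‖T a‖ ^ 2) := Real.sqrt_le_sqrt (hTlow a)
        _ = ‖T a‖ := Real.sqrt_sq (norm_nonneg _)
    have hanti : AntilipschitzWith ⟨(Real.sqrt c)⁻¹, by positivity⟩ T := by
      apply AddMonoidHomClass.antilipschitz_of_bound
      intro a
      change ‖a‖ ≤ (Real.sqrt c)⁻¹ * ‖T a‖
      rw [inv_mul_eq_div, le_div_iff₀ hsc]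
      calc ‖a‖ * Real.sqrt c = Real.sqrt c * ‖a‖ := mul_comm _ _
        _ ≤ ‖T a‖ := hTanti a
    have hclosed : IsClosed (Set.range T) := hanti.isClosed_range T.uniformContinuous
    have hrange : LinearMap.range (T : lp (fun _ : I => ℝ) 2 →ₗ[ℝ] H) = ⊤ := by
      have hsub : Submodule.span ℝ (Set.range f) ≤ LinearMap.range (T : lp (fun _ : I => ℝ) 2 →ₗ[ℝ] H) := by
        rw [Submodule.span_le]
        rintro _ ⟨i, rfl⟩
        refine ⟨∑ j ∈ ({i} : Finset I), lp.single 2 j ((fun _ => (1 : ℝ)) j), ?_⟩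
        rw [ContinuousLinearMap.coe_coe, RieszAux.T_finsupp hT]
        simp
      have htop : (Submodule.span ℝ (Set.range f)).topologicalClosure
          ≤ LinearMap.range (T : lp (fun _ : I => ℝ) 2 →ₗ[ℝ] H) := by
        refine Submodule.topologicalClosure_minimal _ hsub ?_
        have : (LinearMap.range (T : lp (fun _ : I => ℝ) 2 →ₗ[ℝ] H) : Set H) = Set.range T := LinearMap.coe_range _
        rw [this]
        exact hclosed
      rw [hdense] at htop
      exact eq_top_iff.mpr htop
    refine ⟨⟨c, C, hc, hC, fun x => ⟨?_, hupper x⟩⟩, ?_⟩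
    · -- lower frame bound
      obtain ⟨a, ha⟩ := LinearMap.mem_range.mp
        (show x ∈ LinearMap.range (T : lp (fun _ : I => ℝ) 2 →ₗ[ℝ] H) from hrange ▸ Submodule.mem_top)
      rw [ContinuousLinearMap.coe_coe] at ha
      have h1 : HasSum (fun i => (a i : ℝ) * (inner ℝ x (f i) : ℝ)) (inner ℝ x (T a) : ℝ) :=
        RieszAux.hasSum_inner_T hT a x
      have h2 : HasSum (fun i => (a i : ℝ) * (inner ℝ x (f i) : ℝ)) (inner ℝ a (U x) : ℝ) := by
        have h3 := lp.hasSum_inner (𝕜 := ℝ) a (U x)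
        simpa [RCLike.inner_apply, hU, mul_comm] using h3
      have h4 : ‖x‖ ^ 2 = (inner ℝ a (U x) : ℝ) := by
        have h5 := h1.unique h2
        rw [ha, real_inner_self_eq_norm_sq] at h5
        exact h5
      have h5 : (inner ℝ a (U x) : ℝ) ≤ ‖a‖ * ‖U x‖ := real_inner_le_norm a (U x)
      have h6 : Real.sqrt c * ‖a‖ ≤ ‖x‖ := by
        have := hTanti a; rwa [ha] at this
      have h7 : HasSum (fun i => (inner ℝ x (f i) : ℝ) ^ 2) (‖U x‖ ^ 2) := by
        have := RieszAux.hasSum_sq_norm (U x)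
        simpa [hU] using this
      rw [h7.tsum_eq]
      by_cases hx : x = 0
      · subst hx; simp
      · have hxn : 0 < ‖x‖ := norm_pos_iff.2 hx
        have hUx0 : 0 ≤ ‖U x‖ := norm_nonneg _
        have ha0 : 0 ≤ ‖a‖ := norm_nonneg _
        -- ‖x‖² ≤ ‖a‖ ‖U x‖ and √c ‖a‖ ≤ ‖x‖
        have h8 : Real.sqrt c * ‖x‖ ^ 2 ≤ Real.sqrt c * (‖a‖ * ‖U x‖) := by
          rw [h4]; exact mul_le_mul_of_nonneg_left h5 hsc.le
        have h9 : Real.sqrt c * ‖a‖ * ‖U x‖ ≤ ‖x‖ * ‖U x‖ :=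
          mul_le_mul_of_nonneg_right h6 hUx0
        have h10 : Real.sqrt c * ‖x‖ ^ 2 ≤ ‖x‖ * ‖U x‖ := by nlinarith
        have h11 : Real.sqrt c * ‖x‖ ≤ ‖U x‖ := by
          have := (mul_le_mul_iff_left₀ hxn).mp (by nlinarith : (Real.sqrt c * ‖x‖) * ‖x‖ ≤ ‖U x‖ * ‖x‖)
          exact this
        have h12 := Real.sq_sqrt hc.le
        nlinarith [mul_le_mul h11 h11 (by positivity) hUx0]
    · -- ω-independence
      intro co hco i
      have t3 : Filter.Tendsto (fun s : Finset I => ‖∑ j ∈ s, co j • f j‖ ^ 2)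
          Filter.atTop (nhds 0) := by
        have := (hco.norm.pow 2)
        simpa using this
      have hle : c * (co i) ^ 2 ≤ 0 := by
        refine ge_of_tendsto t3 ?_
        filter_upwards [Filter.eventually_ge_atTop ({i} : Finset I)] with s hs
        have h1 := hlow s co
        have h2 : (co i) ^ 2 ≤ ∑ j ∈ s, (co j) ^ 2 :=
          Finset.single_le_sum (fun j _ => sq_nonneg (co j))
            (hs (Finset.mem_singleton_self i))
        nlinarith
      have h3 : (co i) ^ 2 = 0 := le_antisymm (by nlinarith) (sq_nonneg _)
      exact pow_eq_zero_iff (two_ne_zero) |>.mp h3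
  · rintro ⟨⟨A, B, hA, hB, hframe⟩, hindep⟩
    have hsummable : ∀ x : H, Summable (fun i => (inner ℝ x (f i) : ℝ) ^ 2) := by
      intro x
      by_contra hns
      have h0 : ∑' i, (inner ℝ x (f i) : ℝ) ^ 2 = 0 := tsum_eq_zero_of_not_summable hns
      have h1 := (hframe x).1
      rw [h0] at h1
      have hx : x = 0 := RieszAux.eq_zero_of_mul_norm_sq_nonpos hA h1
      subst hx
      refine hns ?_
      have : (fun i => (inner ℝ (0 : H) (f i) : ℝ) ^ 2) = fun _ => (0 : ℝ) := by
        funext i; simp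
      rw [this]
      exact summable_zero
    have hfin : ∀ (x : H) (s : Finset I),
        ∑ i ∈ s, (inner ℝ x (f i) : ℝ) ^ 2 ≤ B * ‖x‖ ^ 2 := fun x s =>
      le_trans (sum_le_hasSum s (fun i _ => sq_nonneg _) (hsummable x).hasSum)
        ((hframe x).2)
    -- upper Riesz bound with constant B
    have hup : ∀ (s : Finset I) (a : I → ℝ),
        ‖∑ i ∈ s, a i • f i‖ ^ 2 ≤ B * ∑ i ∈ s, (a i) ^ 2 := by
      intro s a
      set x := ∑ i ∈ s, a i • f i with hx
      have key : ∀ y : H, (inner ℝ y (∑ i ∈ s, a i • f i) : ℝ)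
          = ∑ i ∈ s, a i * (inner ℝ y (f i) : ℝ) := by
        intro y
        rw [inner_sum]
        exact Finset.sum_congr rfl fun i _ => real_inner_smul_right _ _ _
      have h1 : ‖x‖ ^ 2 = ∑ i ∈ s, a i * (inner ℝ x (f i) : ℝ) := by
        have h1' := key x
        rw [← hx, real_inner_self_eq_norm_sq] at h1'
        exact h1'
      have h2 : (∑ i ∈ s, a i * (inner ℝ x (f i) : ℝ)) ^ 2
          ≤ (∑ i ∈ s, (a i) ^ 2) * ∑ i ∈ s, (inner ℝ x (f i) : ℝ) ^ 2 :=
        Finset.sum_mul_sq_le_sq_mul_sq s _ _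
      have h3 := hfin x s
      have hsum0 : 0 ≤ ∑ i ∈ s, (a i) ^ 2 := Finset.sum_nonneg fun i _ => sq_nonneg _
      by_cases hxz : ‖x‖ = 0
      · rw [hxz]
        have h0 : (0 : ℝ) ^ 2 = 0 := by norm_num
        rw [h0]
        exact mul_nonneg hB.le hsum0
      · have hxpos : 0 < ‖x‖ := (norm_nonneg x).lt_of_ne (Ne.symm hxz)
        have h4 : (‖x‖ ^ 2) ^ 2 ≤ (∑ i ∈ s, (a i) ^ 2) * (B * ‖x‖ ^ 2) := by
          calc (‖x‖ ^ 2) ^ 2 = (∑ i ∈ s, a i * (inner ℝ x (f i) : ℝ)) ^ 2 := by rw [h1]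
            _ ≤ (∑ i ∈ s, (a i) ^ 2) * ∑ i ∈ s, (inner ℝ x (f i) : ℝ) ^ 2 := h2
            _ ≤ (∑ i ∈ s, (a i) ^ 2) * (B * ‖x‖ ^ 2) :=
                mul_le_mul_of_nonneg_left h3 hsum0
        nlinarith [h4, pow_pos hxpos 2]
    -- density
    have hdense : (Submodule.span ℝ (Set.range f)).topologicalClosure = ⊤ := by
      set K := (Submodule.span ℝ (Set.range f)).topologicalClosure with hK
      haveI : CompleteSpace K := (Submodule.isClosed_topologicalClosure _).completeSpace_coe
      rw [← Submodule.orthogonal_eq_bot_iff, Submodule.eq_bot_iff]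
      intro x hx
      have hxi : ∀ i, (inner ℝ x (f i) : ℝ) = 0 := by
        intro i
        have hfK : f i ∈ K :=
          Submodule.le_topologicalClosure _ (Submodule.subset_span ⟨i, rfl⟩)
        have := (Submodule.mem_orthogonal K x).mp hx (f i) hfK
        rw [real_inner_comm]
        exact this
      have h0 : ∑' i, (inner ℝ x (f i) : ℝ) ^ 2 = 0 := by simp [hxi]
      have h1 := (hframe x).1
      rw [h0] at h1
      exact RieszAux.eq_zero_of_mul_norm_sq_nonpos hA h1
    refine ⟨hdense, ?_⟩
    obtain ⟨T, hT⟩ := RieszAux.exists_T hB.le hup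
    obtain ⟨U, hU⟩ := RieszAux.exists_U hB.le hfin
    have hS : ∀ x : H, HasSum (fun i => (inner ℝ x (f i) : ℝ) ^ 2) (inner ℝ x (T (U x)) : ℝ) := by
      intro x
      have := RieszAux.hasSum_inner_T hT (U x) x
      have heq : (fun i => ((U x : ∀ _ : I, ℝ) i) * (inner ℝ x (f i) : ℝ))
          = fun i => (inner ℝ x (f i) : ℝ) ^ 2 := by
        funext i; rw [hU]; ring
      rwa [heq] at this
    have hSlow : ∀ x : H, A * ‖x‖ ^ 2 ≤ (inner ℝ x (T (U x)) : ℝ) := by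
      intro x
      rw [← (hS x).tsum_eq]
      exact (hframe x).1
    have hSnorm : ∀ x : H, A * ‖x‖ ≤ ‖T (U x)‖ := by
      intro x
      by_cases hx : x = 0
      · subst hx; simp
      · have hxp : 0 < ‖x‖ := norm_pos_iff.2 hx
        have h1 := hSlow x
        have h2 : (inner ℝ x (T (U x)) : ℝ) ≤ ‖x‖ * ‖T (U x)‖ := real_inner_le_norm _ _
        nlinarith
    have hSanti : AntilipschitzWith ⟨A⁻¹, by positivity⟩ (T.comp U) := by
      apply AddMonoidHomClass.antilipschitz_of_bound
      intro x
      change ‖x‖ ≤ A⁻¹ * ‖(T.comp U) x‖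
      rw [inv_mul_eq_div, le_div_iff₀ hA]
      have := hSnorm x
      rw [ContinuousLinearMap.comp_apply]
      linarith [mul_comm ‖x‖ A]
    have hSclosed : IsClosed (Set.range (T.comp U)) :=
      hSanti.isClosed_range (T.comp U).uniformContinuous
    have hSrange : LinearMap.range ((T.comp U : H →L[ℝ] H) : H →ₗ[ℝ] H) = ⊤ := by
      haveI : CompleteSpace (LinearMap.range ((T.comp U : H →L[ℝ] H) : H →ₗ[ℝ] H)) := by
        refine IsClosed.completeSpace_coe (hs := ?_)
        have : (LinearMap.range ((T.comp U : H →L[ℝ] H) : H →ₗ[ℝ] H) : Set H) = Set.range (T.comp U) :=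
          LinearMap.coe_range _
        rw [this]
        exact hSclosed
      rw [← Submodule.orthogonal_eq_bot_iff, Submodule.eq_bot_iff]
      intro y hy
      have h1 : (inner ℝ (T (U y)) y : ℝ) = 0 :=
        (Submodule.mem_orthogonal _ y).mp hy _ (LinearMap.mem_range_self _ y)
      have h2 := hSlow y
      rw [← real_inner_comm, h1] at h2
      exact RieszAux.eq_zero_of_mul_norm_sq_nonpos hA h2
    have hTrange : LinearMap.range (T : lp (fun _ : I => ℝ) 2 →ₗ[ℝ] H) = ⊤ := by
      rw [LinearMap.range_eq_top]
      intro x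
      have hx : x ∈ LinearMap.range ((T.comp U : H →L[ℝ] H) : H →ₗ[ℝ] H) := hSrange ▸ Submodule.mem_top
      obtain ⟨y, hy⟩ := hx
      exact ⟨U y, by simpa using hy⟩
    have hTker : LinearMap.ker (T : lp (fun _ : I => ℝ) 2 →ₗ[ℝ] H) = ⊥ := by
      apply LinearMap.ker_eq_bot'.mpr
      intro a ha
      rw [ContinuousLinearMap.coe_coe] at ha
      have h1 := hT a
      rw [ha] at h1
      have h2 := hindep (fun i => (a i : ℝ)) h1
      apply lp.ext
      funext i
      exact h2 i
    set e := ContinuousLinearEquiv.ofBijective T hTker hTrange with he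
    set M := ‖(e.symm : H →L[ℝ] lp (fun _ : I => ℝ) 2)‖ with hM
    have hM0 : 0 ≤ M := norm_nonneg _
    have hMa : ∀ a : lp (fun _ : I => ℝ) 2, ‖a‖ ≤ M * ‖T a‖ := by
      intro a
      have h1 : (e.symm : H →L[ℝ] lp (fun _ : I => ℝ) 2) (T a) = a := by
        rw [ContinuousLinearEquiv.coe_coe, he]
        exact ContinuousLinearEquiv.ofBijective_symm_apply_apply T hTker hTrange a
      calc ‖a‖ = ‖(e.symm : H →L[ℝ] lp (fun _ : I => ℝ) 2) (T a)‖ := by rw [h1]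
        _ ≤ M * ‖T a‖ := ContinuousLinearMap.le_opNorm _ _
    refine ⟨((M + 1) ^ 2)⁻¹, B, by positivity, hB, fun s a => ⟨?_, hup s a⟩⟩
    have h1 := hMa (∑ i ∈ s, lp.single 2 i (a i))
    rw [RieszAux.T_finsupp hT] at h1
    have h2 : ‖(∑ i ∈ s, lp.single 2 i (a i) : lp (fun _ : I => ℝ) 2)‖ ^ 2
        = ∑ i ∈ s, (a i) ^ 2 := RieszAux.norm_sq_finsupp s a
    have h3 : ∑ i ∈ s, (a i) ^ 2 ≤ (M + 1) ^ 2 * ‖∑ i ∈ s, a i • f i‖ ^ 2 := by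
      rw [← h2]
      nlinarith [norm_nonneg (∑ i ∈ s, lp.single 2 i (a i) : lp (fun _ : I => ℝ) 2),
        norm_nonneg (∑ i ∈ s, a i • f i)]
    rw [inv_mul_le_iff₀ (by positivity)]
    exact h3
end

section
/- Let {e_i}_{i=1}^∞ be an orthonormal basis for a separable Hilbert space H, let I, J ⊆ {2, 3, …} with I ∩ J ≠ ∅, and let {f_i}_{i∈L} denote the family consisting of e_i for i ∈ I together with e_i + 2^{−i}e_1 for i ∈ J. Then the synthesis operator T : ℓ²(L) → closure(span{f_i}_{i∈L}), T{c_i} = ∑_{i∈L} c_i f_i, is well defined, bounded, and surjective; consequently {f_i}_{i∈L} is a frame for its closed linear span, which equals the closed span of {e_1} ∪ {e_i}_{i∈I∪J}. -/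
open scoped BigOperators ENNReal InnerProductSpace

private lemma hasSum_sumType' {α β M : Type*} [AddCommMonoid M] [TopologicalSpace M]
    [ContinuousAdd M] {f : α ⊕ β → M} {a b : M}
    (ha : HasSum (fun x => f (Sum.inl x)) a) (hb : HasSum (fun x => f (Sum.inr x)) b) :
    HasSum f (a + b) := by
  have h1 : HasSum (Sum.elim (fun x => f (Sum.inl x)) (fun _ : β => (0 : M))) a := by
    rw [← (Function.Injective.hasSum_iff Sum.inl_injective ?_ : _ ↔ _)]
    · exact ha
    · rintro (x | y) hx
      · exact absurd ⟨x, rfl⟩ hx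
      · rfl
  have h2 : HasSum (Sum.elim (fun _ : α => (0 : M)) (fun y => f (Sum.inr y))) b := by
    rw [← (Function.Injective.hasSum_iff Sum.inr_injective ?_ : _ ↔ _)]
    · exact hb
    · rintro (x | y) hx
      · rfl
      · exact absurd ⟨y, rfl⟩ hx
  have := h1.add h2
  convert this using 1
  funext l
  cases l <;> simp

private lemma hasSum_sumType_inr' {α β M : Type*} [AddCommGroup M] [TopologicalSpace M]
    [IsTopologicalAddGroup M] [T2Space M] {f : α ⊕ β → M} {S a : M}
    (hf : HasSum f S) (hinl : HasSum (fun x => f (Sum.inl x)) a)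
    (hinr : Summable (fun x => f (Sum.inr x))) :
    HasSum (fun x => f (Sum.inr x)) (S - a) := by
  obtain ⟨b, hb⟩ := hinr
  have h := hasSum_sumType' hinl hb
  have : S = a + b := hf.unique h
  rw [this, add_sub_cancel_left]
  exact hb

private lemma summable_sumType'' {α β M : Type*} [AddCommMonoid M] [TopologicalSpace M]
    [ContinuousAdd M] {f : α ⊕ β → M} (h1 : Summable (fun x => f (Sum.inl x)))
    (h2 : Summable (fun x => f (Sum.inr x))) : Summable f := by
  obtain ⟨A, hA⟩ := h1
  obtain ⟨B, hB⟩ := h2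
  exact ⟨A + B, hasSum_sumType' hA hB⟩

private lemma rpow_toReal_two (x : ℝ) : x ^ ((2:ℝ≥0∞).toReal) = x ^ 2 := by
  rw [show ((2:ℝ≥0∞).toReal) = ((2:ℕ):ℝ) by norm_num, Real.rpow_natCast]

private lemma norm_rpow_toReal_two (x : ℝ) : ‖x‖ ^ ((2:ℝ≥0∞).toReal) = x ^ 2 := by
  rw [rpow_toReal_two, Real.norm_eq_abs, sq_abs]

private lemma memℓp_two_of_sq {ι : Type*} {g : ι → ℝ} (h : Summable (fun i => g i ^ 2)) :
    Memℓp g 2 := by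
  apply memℓp_gen
  simpa only [norm_rpow_toReal_two] using h

private lemma lp_hasSum_sq {ι : Type*} (g : lp (fun _ : ι => ℝ) 2) :
    HasSum (fun i => (g i)^2) (‖g‖^2) := by
  have h := lp.hasSum_norm (p := 2) (by norm_num) g
  simpa only [norm_rpow_toReal_two, rpow_toReal_two, Real.norm_eq_abs, sq_abs] using h

private lemma twopow_inv_sq (n : ℕ) : (((2:ℝ)^n)⁻¹)^2 = ((1:ℝ)/4)^n := by
  rw [← inv_pow, ← pow_mul, mul_comm, pow_mul]
  norm_num

open scoped BigOperators

set_option maxHeartbeats 2000000 in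
theorem stmt_16 {H : Type*} [NormedAddCommGroup H] [InnerProductSpace ℝ H]
    [CompleteSpace H] [TopologicalSpace.SeparableSpace H]
    (e : ℕ → H) (he : Orthonormal ℝ e)
    (hbasis : (Submodule.span ℝ (Set.range fun n : {n : ℕ // 1 ≤ n} => e (n : ℕ))).topologicalClosure = ⊤)
    (I J : Set ℕ) (hI : I ⊆ {n | 2 ≤ n}) (hJ : J ⊆ {n | 2 ≤ n}) (hIJ : (I ∩ J).Nonempty)
    -- the family `{f_i}_{i ∈ L}` consisting of `e_i` for `i ∈ I` together with
    -- `e_i + 2^{-i} e_1` for `i ∈ J`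
    (f : ↥I ⊕ ↥J → H)
    (hfI : ∀ i : ↥I, f (Sum.inl i) = e (i : ℕ))
    (hfJ : ∀ j : ↥J, f (Sum.inr j) = e (j : ℕ) + ((2 : ℝ) ^ (j : ℕ))⁻¹ • e 1) :
    -- the synthesis operator is well defined, bounded, and maps onto the closed span
    (∃ T : lp (fun _ : ↥I ⊕ ↥J => ℝ) 2 →L[ℝ] H,
      (∀ c : lp (fun _ : ↥I ⊕ ↥J => ℝ) 2, HasSum (fun l => c l • f l) (T c)) ∧
      Set.range T = ((Submodule.span ℝ (Set.range f)).topologicalClosure : Set H)) ∧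
    -- consequently `{f_i}` is a frame for its closed linear span ...
    IsFrameFor f ((Submodule.span ℝ (Set.range f)).topologicalClosure : Set H) ∧
    -- ... which equals the closed span of `{e_1} ∪ {e_i}_{i ∈ I ∪ J}`
    (Submodule.span ℝ (Set.range f)).topologicalClosure
      = (Submodule.span ℝ ({e 1} ∪ e '' (I ∪ J))).topologicalClosure := by
  classical
  obtain ⟨k₀, hk₀I, hk₀J⟩ := hIJ
  have h2k₀ : 2 ≤ k₀ := hI hk₀I
  have hone : (1:ℕ) ∉ I ∪ J := by
    rintro (h | h)
    · exact absurd (hI h) (by norm_num)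
    · exact absurd (hJ h) (by norm_num)
  -- span equality
  have he1mem : e 1 ∈ Submodule.span ℝ (Set.range f) := by
    have h21 : f (Sum.inr ⟨k₀, hk₀J⟩) - f (Sum.inl ⟨k₀, hk₀I⟩) = ((2:ℝ)^k₀)⁻¹ • e 1 := by
      rw [hfI, hfJ]; abel
    have h22 : ((2:ℝ)^k₀) • (f (Sum.inr ⟨k₀, hk₀J⟩) - f (Sum.inl ⟨k₀, hk₀I⟩)) = e 1 := by
      rw [h21, smul_smul]
      rw [mul_inv_cancel₀ (by positivity), one_smul]
    rw [← h22]
    exact Submodule.smul_mem _ _ (Submodule.sub_mem _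
      (Submodule.subset_span ⟨_, rfl⟩) (Submodule.subset_span ⟨_, rfl⟩))
  have hspan : Submodule.span ℝ (Set.range f) = Submodule.span ℝ ({e 1} ∪ e '' (I ∪ J)) := by
    apply le_antisymm
    · rw [Submodule.span_le]
      rintro _ ⟨l, rfl⟩
      cases l with
      | inl i =>
        rw [hfI]
        exact Submodule.subset_span (Or.inr ⟨_, Or.inl i.2, rfl⟩)
      | inr j =>
        rw [hfJ]
        exact Submodule.add_mem _
          (Submodule.subset_span (Or.inr ⟨_, Or.inr j.2, rfl⟩))
          (Submodule.smul_mem _ _ (Submodule.subset_span (Or.inl rfl)))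
    · rw [Submodule.span_le]
      rintro z (hz | ⟨m, hm, rfl⟩)
      · rw [Set.mem_singleton_iff] at hz
        rw [hz]
        exact he1mem
      · cases hm with
        | inl hmI => exact hfI ⟨m, hmI⟩ ▸ Submodule.subset_span ⟨Sum.inl ⟨m, hmI⟩, rfl⟩
        | inr hmJ =>
          have : e m = f (Sum.inr ⟨m, hmJ⟩) - ((2:ℝ)^m)⁻¹ • e 1 := by rw [hfJ]; abel
          rw [this]
          exact Submodule.sub_mem _ (Submodule.subset_span ⟨_, rfl⟩)
            (Submodule.smul_mem _ _ he1mem)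
  set V := (Submodule.span ℝ (Set.range f)).topologicalClosure with hV
  haveI : CompleteSpace V := (Submodule.isClosed_topologicalClosure _).completeSpace_coe
  set K : Set ℕ := insert 1 (I ∪ J) with hK
  have hmemVe : ∀ n ∈ K, e n ∈ V := by
    intro n hn
    apply Submodule.le_topologicalClosure
    rw [hspan]
    apply Submodule.subset_span
    rcases hn with rfl | hn
    · exact Or.inl rfl
    · exact Or.inr ⟨n, hn, rfl⟩
  have hu : Orthonormal ℝ (fun k : ↥K => e ↑k) :=
    he.comp (Subtype.val : ↥K → ℕ) Subtype.val_injective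
  set v : ↥K → V := fun k => ⟨e ↑k, hmemVe _ k.2⟩ with hv
  have hv_on : Orthonormal ℝ v := by
    rw [orthonormal_iff_ite] at hu ⊢
    intro i j
    rw [Submodule.coe_inner]
    exact hu i j
  have hdense : ⊤ ≤ (Submodule.span ℝ (Set.range v)).topologicalClosure := by
    have hbot : (Submodule.span ℝ (Set.range v))ᗮ = ⊥ := by
      rw [Submodule.eq_bot_iff]
      intro y hy
      have hy' : ∀ k : ↥K, (inner ℝ (e ↑k) (y : H) : ℝ) = 0 := by
        intro k
        have := (Submodule.mem_orthogonal _ y).mp hy (v k) (Submodule.subset_span ⟨k, rfl⟩)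
        simpa [Submodule.coe_inner] using this
      have hVle : V ≤ (ℝ ∙ (y:H))ᗮ := by
        show (Submodule.span ℝ (Set.range f)).topologicalClosure ≤ _
        rw [hspan]
        apply Submodule.topologicalClosure_minimal
        · rw [Submodule.span_le]
          rintro z (hz | ⟨m, hm, rfl⟩)
          · rw [Set.mem_singleton_iff] at hz
            rw [SetLike.mem_coe, Submodule.mem_orthogonal_singleton_iff_inner_right, hz,
              real_inner_comm]
            exact hy' ⟨1, Or.inl rfl⟩
          · rw [SetLike.mem_coe, Submodule.mem_orthogonal_singleton_iff_inner_right,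
              real_inner_comm]
            exact hy' ⟨m, Or.inr hm⟩
        · exact Submodule.isClosed_orthogonal _
      have : (inner ℝ (y:H) (y:H) : ℝ) = 0 := by
        have := hVle y.2
        rw [Submodule.mem_orthogonal_singleton_iff_inner_right] at this
        rwa [real_inner_comm] at this
      exact Subtype.ext (inner_self_eq_zero.mp this)
    exact le_of_eq ((Submodule.topologicalClosure_eq_top_iff).mpr hbot).symm
  set b : HilbertBasis ↥K ℝ V := HilbertBasis.mk hv_on hdense with hbdef
  have hb : ⇑b = v := HilbertBasis.coe_mk _ _
  -- key facts for x ∈ V : expansion and Parseval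
  have key : ∀ x : H, x ∈ (V : Set H) →
      HasSum (fun k : ↥K => (inner ℝ (e ↑k) x : ℝ) • e ↑k) x ∧
      HasSum (fun k : ↥K => (inner ℝ (e ↑k) x : ℝ)^2) (‖x‖^2) := by
    intro x hx
    set x' : V := ⟨x, hx⟩ with hx'
    have hrepr : ∀ k : ↥K, b.repr x' k = (inner ℝ (e ↑k) x : ℝ) := by
      intro k
      rw [HilbertBasis.repr_apply_apply, hb]
      rw [Submodule.coe_inner]
    constructor
    · have h := (b.hasSum_repr x').mapL (Submodule.subtypeL V)
      convert h using 1
      funext k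
      rw [map_smul, hrepr k, hb]
      rfl
      rfl
    · have h := b.hasSum_inner_mul_inner x' x'
      have h1 : (fun k : ↥K => (inner ℝ x' (b k) : ℝ) * (inner ℝ (b k) x' : ℝ))
          = fun k : ↥K => (inner ℝ (e ↑k) x : ℝ)^2 := by
        funext k
        rw [real_inner_comm x' (b k), hb, Submodule.coe_inner, sq]
        congr 1 <;> exact real_inner_comm _ _
      rw [h1] at h
      have h2 : (inner ℝ x' x' : ℝ) = ‖x‖^2 := by
        rw [Submodule.coe_inner, real_inner_self_eq_norm_sq]
      rwa [h2] at h
  -- orthonormal families over I and J, synthesis isometries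
  have heI : Orthonormal ℝ (fun i : ↥I => e ↑i) :=
    he.comp (Subtype.val : ↥I → ℕ) Subtype.val_injective
  have heJ : Orthonormal ℝ (fun j : ↥J => e ↑j) :=
    he.comp (Subtype.val : ↥J → ℕ) Subtype.val_injective
  -- restriction maps
  let PI : lp (fun _ : ↥I ⊕ ↥J => ℝ) 2 →ₗ[ℝ] lp (fun _ : ↥I => ℝ) 2 :=
    { toFun := fun c => ⟨fun i => c (Sum.inl i), memℓp_two_of_sq
        (((lp_hasSum_sq c).summable).comp_injective Sum.inl_injective)⟩
      map_add' := fun c d => Subtype.ext (funext fun i => by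
        simp only [lp.coeFn_add, Pi.add_apply])
      map_smul' := fun r c => Subtype.ext (funext fun i => by
        simp only [lp.coeFn_smul, Pi.smul_apply, RingHom.id_apply, smul_eq_mul]) }
  let PJ : lp (fun _ : ↥I ⊕ ↥J => ℝ) 2 →ₗ[ℝ] lp (fun _ : ↥J => ℝ) 2 :=
    { toFun := fun c => ⟨fun j => c (Sum.inr j), memℓp_two_of_sq
        (((lp_hasSum_sq c).summable).comp_injective Sum.inr_injective)⟩
      map_add' := fun c d => Subtype.ext (funext fun j => by
        simp only [lp.coeFn_add, Pi.add_apply])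
      map_smul' := fun r c => Subtype.ext (funext fun j => by
        simp only [lp.coeFn_smul, Pi.smul_apply, RingHom.id_apply, smul_eq_mul]) }
  have hPInorm : ∀ c, ‖PI c‖ ≤ 1 * ‖c‖ := by
    intro c
    rw [one_mul]
    have h1 := lp_hasSum_sq (PI c)
    have h2 := lp_hasSum_sq c
    have hle : ‖PI c‖^2 ≤ ‖c‖^2 := by
      rw [← h1.tsum_eq, ← h2.tsum_eq]
      refine Summable.tsum_le_tsum_of_inj Sum.inl Sum.inl_injective
        (fun l _ => by positivity) (fun i => le_of_eq rfl) h1.summable h2.summable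
    calc ‖PI c‖ = Real.sqrt (‖PI c‖^2) := (Real.sqrt_sq (norm_nonneg _)).symm
    _ ≤ Real.sqrt (‖c‖^2) := Real.sqrt_le_sqrt hle
    _ = ‖c‖ := Real.sqrt_sq (norm_nonneg _)
  have hPJnorm : ∀ c, ‖PJ c‖ ≤ 1 * ‖c‖ := by
    intro c
    rw [one_mul]
    have h1 := lp_hasSum_sq (PJ c)
    have h2 := lp_hasSum_sq c
    have hle : ‖PJ c‖^2 ≤ ‖c‖^2 := by
      rw [← h1.tsum_eq, ← h2.tsum_eq]
      refine Summable.tsum_le_tsum_of_inj Sum.inr Sum.inr_injective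
        (fun l _ => by positivity) (fun j => le_of_eq rfl) h1.summable h2.summable
    calc ‖PJ c‖ = Real.sqrt (‖PJ c‖^2) := (Real.sqrt_sq (norm_nonneg _)).symm
    _ ≤ Real.sqrt (‖c‖^2) := Real.sqrt_le_sqrt hle
    _ = ‖c‖ := Real.sqrt_sq (norm_nonneg _)
  let restrI := PI.mkContinuous 1 hPInorm
  let restrJ := PJ.mkContinuous 1 hPJnorm
  -- the vector w implementing the e 1 - coefficient functional
  have hgeo4 : Summable (fun j : ↥J => (((2:ℝ)^(j:ℕ))⁻¹)^2) := by
    have hg : Summable (fun n : ℕ => ((1:ℝ)/4)^n) :=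
      summable_geometric_of_lt_one (by norm_num) (by norm_num)
    exact (hg.comp_injective Subtype.val_injective).congr
      (fun j => (twopow_inv_sq (j:ℕ)).symm)
  have hwmem : Summable (fun l : ↥I ⊕ ↥J =>
      (Sum.elim (fun _ : ↥I => (0:ℝ)) (fun j : ↥J => ((2:ℝ)^(j:ℕ))⁻¹) l)^2) := by
    obtain ⟨S, hS⟩ := hgeo4
    exact (hasSum_sumType' (f := fun l => (Sum.elim (fun _ : ↥I => (0:ℝ))
      (fun j : ↥J => ((2:ℝ)^(j:ℕ))⁻¹) l)^2) (a := 0) (by simp) (by simpa using hS)).summable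
  let w : lp (fun _ : ↥I ⊕ ↥J => ℝ) 2 :=
    ⟨Sum.elim (fun _ : ↥I => (0:ℝ)) (fun j : ↥J => ((2:ℝ)^(j:ℕ))⁻¹), memℓp_two_of_sq hwmem⟩
  let T : lp (fun _ : ↥I ⊕ ↥J => ℝ) 2 →L[ℝ] H :=
    ((heI.orthogonalFamily.linearIsometry).toContinuousLinearMap).comp restrI
    + ((heJ.orthogonalFamily.linearIsometry).toContinuousLinearMap).comp restrJ
    + (innerSL ℝ w).smulRight (e 1)
  have hTapp : ∀ c, T c = heI.orthogonalFamily.linearIsometry (restrI c)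
      + (heJ.orthogonalFamily.linearIsometry (restrJ c) + (inner ℝ w c : ℝ) • e 1) := by
    intro c
    simp only [T, ContinuousLinearMap.add_apply, ContinuousLinearMap.coe_comp',
      Function.comp_apply, ContinuousLinearMap.smulRight_apply, innerSL_apply_apply,
      LinearIsometry.coe_toContinuousLinearMap, add_assoc]
  have hT : ∀ c : lp (fun _ : ↥I ⊕ ↥J => ℝ) 2, HasSum (fun l => c l • f l) (T c) := by
    intro c
    have h1 : HasSum (fun i : ↥I => c (Sum.inl i) • e ↑i)
        (heI.orthogonalFamily.linearIsometry (restrI c)) := by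
      have h := heI.orthogonalFamily.hasSum_linearIsometry (restrI c)
      exact h
    have h2 : HasSum (fun j : ↥J => c (Sum.inr j) • e ↑j)
        (heJ.orthogonalFamily.linearIsometry (restrJ c)) := by
      have h := heJ.orthogonalFamily.hasSum_linearIsometry (restrJ c)
      exact h
    have h3 : HasSum (fun j : ↥J => ((2:ℝ)^(j:ℕ))⁻¹ * c (Sum.inr j)) (inner ℝ w c : ℝ) := by
      have hfull := lp.hasSum_inner (𝕜 := ℝ) w c
      have hinl : HasSum (fun i : ↥I => (inner ℝ (w (Sum.inl i)) (c (Sum.inl i)) : ℝ)) 0 := by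
        have : (fun i : ↥I => (inner ℝ (w (Sum.inl i)) (c (Sum.inl i)) : ℝ)) = fun _ => (0:ℝ) := by
          funext i
          rw [show w (Sum.inl i) = (0:ℝ) from rfl, inner_zero_left]
        rw [this]
        exact hasSum_zero
      have hs := (hfull.summable).comp_injective Sum.inr_injective
      have h := hasSum_sumType_inr' hfull hinl hs
      rw [sub_zero] at h
      have heq : (fun j : ↥J => (inner ℝ (w (Sum.inr j)) (c (Sum.inr j)) : ℝ))
          = fun j : ↥J => ((2:ℝ)^(j:ℕ))⁻¹ * c (Sum.inr j) := by
        funext j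
        rw [show w (Sum.inr j) = ((2:ℝ)^(j:ℕ))⁻¹ from rfl, RCLike.inner_apply,
          starRingEnd_apply, star_trivial, mul_comm]
      rwa [heq] at h
    have h4 := h3.smul_const (e 1)
    have hinr : HasSum (fun j : ↥J => c (Sum.inr j) • f (Sum.inr j))
        (heJ.orthogonalFamily.linearIsometry (restrJ c) + (inner ℝ w c : ℝ) • e 1) := by
      have h := h2.add h4
      convert h using 1
      funext j
      rw [hfJ j, smul_add, smul_smul, mul_comm (c (Sum.inr j)) (((2:ℝ)^(j:ℕ))⁻¹)]
    have hinl' : HasSum (fun i : ↥I => c (Sum.inl i) • f (Sum.inl i))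
        (heI.orthogonalFamily.linearIsometry (restrI c)) := by
      have heq : (fun i : ↥I => c (Sum.inl i) • f (Sum.inl i))
          = fun i : ↥I => c (Sum.inl i) • e ↑i := by
        funext i; rw [hfI i]
      rw [heq]
      exact h1
    have htot := hasSum_sumType' (f := fun l => c l • f l) hinl' hinr
    rwa [← hTapp c] at htot
  -- range T ⊆ V
  have hTmem : ∀ c, T c ∈ (V : Set H) := by
    intro c
    have h : T c ∈ closure (Submodule.span ℝ (Set.range f) : Set H) := by
      refine mem_closure_of_tendsto (hT c) (Filter.Eventually.of_forall fun s => ?_)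
      exact Submodule.sum_mem _ fun l _ => Submodule.smul_mem _ _ (Submodule.subset_span ⟨l, rfl⟩)
    rwa [← Submodule.topologicalClosure_coe] at h
  -- surjectivity of T onto V
  have hsurj : ∀ x ∈ (V : Set H), ∃ cc : lp (fun _ : ↥I ⊕ ↥J => ℝ) 2, T cc = x := by
    intro x hx
    obtain ⟨hxsum, _⟩ := key x hx
    set a : ℕ → ℝ := fun n => (inner ℝ (e n) x : ℝ) with ha
    have sI : Summable (fun i : ↥I => (a ↑i)^2) := by
      have h := heI.inner_products_summable (x := x)
      simpa [Real.norm_eq_abs, sq_abs] using h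
    have sJ : Summable (fun j : ↥J => (a ↑j)^2) := by
      have h := heJ.inner_products_summable (x := x)
      simpa [Real.norm_eq_abs, sq_abs] using h
    have sgeo : Summable (fun j : ↥J => ((2:ℝ)^(j:ℕ))⁻¹) := by
      have hg : Summable (fun n : ℕ => ((1:ℝ)/2)^n) :=
        summable_geometric_of_lt_one (by norm_num) (by norm_num)
      refine (hg.comp_injective Subtype.val_injective).congr (fun j => ?_)
      simp [one_div, inv_pow]
    have habs : ∀ n, |a n| ≤ ‖x‖ := by
      intro n
      have h := abs_real_inner_le_norm (e n) x
      simpa [he.1 n] using h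
    have ssum : Summable (fun j : ↥J => ((2:ℝ)^(j:ℕ))⁻¹ * a ↑j) := by
      have h1 : Summable (fun j : ↥J => |((2:ℝ)^(j:ℕ))⁻¹ * a ↑j|) := by
        refine Summable.of_nonneg_of_le (fun j => abs_nonneg _) (fun j => ?_)
          (sgeo.mul_right ‖x‖)
        rw [abs_mul, abs_of_nonneg (by positivity : (0:ℝ) ≤ ((2:ℝ)^(j:ℕ))⁻¹)]
        exact mul_le_mul_of_nonneg_left (habs _) (by positivity)
      exact h1.of_abs
    set s : ℝ := ∑' j : ↥J, ((2:ℝ)^(j:ℕ))⁻¹ * a ↑j with hs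
    have hssum : HasSum (fun j : ↥J => ((2:ℝ)^(j:ℕ))⁻¹ * a ↑j) s := ssum.hasSum
    set t : ℝ := (2:ℝ)^k₀ * (a 1 - s) with ht
    set c₀ : ↥I ⊕ ↥J → ℝ :=
      Sum.elim (fun i : ↥I => if (i:ℕ) ∈ J then 0 else a ↑i) (fun j : ↥J => a ↑j) with hc₀
    set d : ↥I ⊕ ↥J → ℝ := fun l =>
      if l = Sum.inl ⟨k₀, hk₀I⟩ then -t else if l = Sum.inr ⟨k₀, hk₀J⟩ then t else 0 with hd
    have hmc₀ : Memℓp c₀ 2 := by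
      apply memℓp_two_of_sq
      apply summable_sumType''
      · refine Summable.of_nonneg_of_le (fun i => sq_nonneg _) (fun i => ?_) sI
        by_cases h : (i:ℕ) ∈ J <;> simp [c₀, h, sq_nonneg]
      · exact sJ.congr (fun j => rfl)
    have hmd : Memℓp d 2 := by
      apply memℓp_two_of_sq
      apply summable_of_ne_finset_zero
        (s := {Sum.inl (⟨k₀, hk₀I⟩ : ↥I), Sum.inr (⟨k₀, hk₀J⟩ : ↥J)})
      intro l hl
      simp only [Finset.mem_insert, Finset.mem_singleton, not_or] at hl
      simp [d, hl.1, hl.2]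
    set cc : lp (fun _ : ↥I ⊕ ↥J => ℝ) 2 := ⟨c₀ + d, hmc₀.add hmd⟩ with hcc
    set g : ℕ → H := fun n => a n • e n with hg
    have hKind : HasSum (Set.indicator K g) x := by
      rw [← hasSum_subtype_iff_indicator]
      exact hxsum
    have h1ind : HasSum (Set.indicator {1} g) (a 1 • e 1) := by
      have heq : Set.indicator {(1:ℕ)} g = fun n => if n = 1 then a 1 • e 1 else 0 := by
        funext n
        by_cases h : n = 1
        · subst h; simp [Set.indicator, g]
        · simp [Set.indicator, h]
      rw [heq]
      exact hasSum_ite_eq 1 _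
    have hdisj1 : Disjoint ({1} : Set ℕ) (I ∪ J) := by
      rw [Set.disjoint_left]
      rintro n hn hn'
      rw [Set.mem_singleton_iff] at hn
      exact hone (hn ▸ hn')
    have hKsplit : Set.indicator K g
        = fun n => Set.indicator {1} g n + Set.indicator (I ∪ J) g n := by
      rw [hK, Set.insert_eq, Set.indicator_union_of_disjoint hdisj1]
    have hIJind : HasSum (Set.indicator (I ∪ J) g) (x - a 1 • e 1) := by
      have h := hKind.sub h1ind
      have heq : (fun n => Set.indicator K g n - Set.indicator {1} g n)
          = Set.indicator (I ∪ J) g := by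
        funext n
        rw [congrFun hKsplit n]
        abel
      rwa [heq] at h
    have hJ2 : HasSum (Set.indicator J g) (∑' n, Set.indicator J g n) := by
      have hsummJ : Summable (Set.indicator J g) := by
        have h := hIJind.summable.indicator J
        rwa [Set.indicator_indicator, Set.inter_eq_left.mpr Set.subset_union_right] at h
      exact hsummJ.hasSum
    set z₂ : H := ∑' n, Set.indicator J g n with hz₂
    have hdiffind : HasSum (Set.indicator (I \ J) g) (x - a 1 • e 1 - z₂) := by
      have h := hIJind.sub hJ2
      have hsplit2 : Set.indicator (I ∪ J) g
          = fun n => Set.indicator (I \ J) g n + Set.indicator J g n := by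
        rw [← Set.diff_union_self, Set.indicator_union_of_disjoint Set.disjoint_sdiff_left]
      have heq : (fun n => Set.indicator (I ∪ J) g n - Set.indicator J g n)
          = Set.indicator (I \ J) g := by
        funext n
        rw [congrFun hsplit2 n]
        abel
      rwa [heq] at h
    have hinlc₀ : HasSum (fun i : ↥I => c₀ (Sum.inl i) • f (Sum.inl i))
        (x - a 1 • e 1 - z₂) := by
      have heq : (fun i : ↥I => c₀ (Sum.inl i) • f (Sum.inl i))
          = fun i : ↥I => Set.indicator (I \ J) g ↑i := by
        funext i
        rw [hfI]
        by_cases h : (i:ℕ) ∈ J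
        · simp [c₀, h, Set.indicator, Set.mem_diff]
        · simp [c₀, h, Set.indicator, Set.mem_diff, i.2, g]
      rw [heq]
      have h' : HasSum (Set.indicator I (Set.indicator (I \ J) g)) (x - a 1 • e 1 - z₂) := by
        rwa [Set.indicator_indicator, Set.inter_eq_right.mpr Set.diff_subset]
      exact (hasSum_subtype_iff_indicator (s := I)).mpr h'
    have hinrc₀ : HasSum (fun j : ↥J => c₀ (Sum.inr j) • f (Sum.inr j)) (z₂ + s • e 1) := by
      have hA : HasSum (fun j : ↥J => a ↑j • e ↑j) z₂ := by
        have heq : (fun j : ↥J => a ↑j • e ↑j) = fun j : ↥J => Set.indicator J g ↑j := by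
          funext j
          simp [Set.indicator, j.2, g]
        rw [heq]
        have h' : HasSum (Set.indicator J (Set.indicator J g)) z₂ := by
          rwa [Set.indicator_indicator, Set.inter_self]
        exact (hasSum_subtype_iff_indicator (s := J)).mpr h'
      have hB : HasSum (fun j : ↥J => (((2:ℝ)^(j:ℕ))⁻¹ * a ↑j) • e 1) (s • e 1) :=
        hssum.smul_const (e 1)
      have h := hA.add hB
      convert h using 1
      funext j
      rw [show c₀ (Sum.inr j) = a ↑j from rfl, hfJ j, smul_add, smul_smul,
        mul_comm (a ↑j) (((2:ℝ)^(j:ℕ))⁻¹)]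
    have hdsum : HasSum (fun l => d l • f l) ((a 1 - s) • e 1) := by
      have hl : HasSum (fun i : ↥I => d (Sum.inl i) • f (Sum.inl i))
          ((-t) • f (Sum.inl ⟨k₀, hk₀I⟩)) := by
        have heq : (fun i : ↥I => d (Sum.inl i) • f (Sum.inl i))
            = fun i : ↥I => if i = (⟨k₀, hk₀I⟩ : ↥I) then (-t) • f (Sum.inl ⟨k₀, hk₀I⟩) else 0 := by
          funext i
          by_cases h : i = (⟨k₀, hk₀I⟩ : ↥I)
          · subst h; simp [d]
          · have h2 : Sum.inl (β := ↥J) i ≠ Sum.inl (⟨k₀, hk₀I⟩ : ↥I) := by simpa using h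
            simp [d, h, h2]
        rw [heq]
        exact hasSum_ite_eq _ _
      have hr : HasSum (fun j : ↥J => d (Sum.inr j) • f (Sum.inr j))
          (t • f (Sum.inr ⟨k₀, hk₀J⟩)) := by
        have heq : (fun j : ↥J => d (Sum.inr j) • f (Sum.inr j))
            = fun j : ↥J => if j = (⟨k₀, hk₀J⟩ : ↥J) then t • f (Sum.inr ⟨k₀, hk₀J⟩) else 0 := by
          funext j
          by_cases h : j = (⟨k₀, hk₀J⟩ : ↥J)
          · subst h; simp [d]
          · have h2 : Sum.inr (α := ↥I) j ≠ Sum.inr (⟨k₀, hk₀J⟩ : ↥J) := by simpa using h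
            simp [d, h, h2]
        rw [heq]
        exact hasSum_ite_eq _ _
      have h := hasSum_sumType' (f := fun l => d l • f l) hl hr
      convert h using 1
      rw [hfI, hfJ, smul_add, ← add_assoc, neg_smul, neg_add_cancel, zero_add, smul_smul]
      rw [show t * ((2:ℝ)^(k₀:ℕ))⁻¹ = a 1 - s by
        rw [ht, mul_comm ((2:ℝ)^k₀) (a 1 - s), mul_assoc,
          mul_inv_cancel₀ (by positivity : ((2:ℝ)^k₀) ≠ 0), mul_one]]
    have hc₀sum := hasSum_sumType' (f := fun l => c₀ l • f l) hinlc₀ hinrc₀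
    have hccsum : HasSum (fun l => cc l • f l) x := by
      have h := hc₀sum.add hdsum
      have heq : (fun l => cc l • f l) = fun l => c₀ l • f l + d l • f l := by
        funext l
        rw [show cc l = c₀ l + d l from rfl, add_smul]
      rw [heq]
      convert h using 1
      rw [sub_smul]
      abel
    exact ⟨cc, (hT cc).unique hccsum⟩
  have hrange : Set.range T = (V : Set H) := by
    apply Set.Subset.antisymm
    · rintro _ ⟨c, rfl⟩
      exact hTmem c
    · intro x hx
      obtain ⟨cc, hcc⟩ := hsurj x hx
      exact ⟨cc, hcc⟩
  -- frame bounds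
  set P : ℝ := (2:ℝ)^k₀ with hPdef
  have hPpos : (0:ℝ) < P := by positivity
  have hframe : IsFrameFor f ((Submodule.span ℝ (Set.range f)).topologicalClosure : Set H) := by
    refine ⟨(3 + 10*P^2)⁻¹, 7, by positivity, by norm_num, ?_⟩
    intro x hx
    obtain ⟨_, hxpar⟩ := key x hx
    set a : ℕ → ℝ := fun n => (inner ℝ (e n) x : ℝ) with ha
    set h : ℕ → ℝ := fun n => (a n)^2 with hh
    have sI : Summable (fun i : ↥I => (a ↑i)^2) := by
      have h' := heI.inner_products_summable (x := x)
      simpa [Real.norm_eq_abs, sq_abs] using h'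
    have sJ : Summable (fun j : ↥J => (a ↑j)^2) := by
      have h' := heJ.inner_products_summable (x := x)
      simpa [Real.norm_eq_abs, sq_abs] using h'
    have hgeo4' : Summable (fun j : ↥J => ((1:ℝ)/4)^(j:ℕ)) := by
      have hg : Summable (fun n : ℕ => ((1:ℝ)/4)^n) :=
        summable_geometric_of_lt_one (by norm_num) (by norm_num)
      exact hg.comp_injective Subtype.val_injective
    set G : ℝ := ∑' j : ↥J, ((1:ℝ)/4)^(j:ℕ) with hGdef
    have hGsum : HasSum (fun j : ↥J => ((1:ℝ)/4)^(j:ℕ)) G := hgeo4'.hasSum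
    have hGnonneg : 0 ≤ G := tsum_nonneg (fun j => by positivity)
    have hG2 : G ≤ 2 := by
      have h1 : G ≤ ∑' n : ℕ, ((1:ℝ)/4)^n := by
        refine Summable.tsum_le_tsum_of_inj Subtype.val Subtype.val_injective
          (fun n _ => by positivity) (fun j => le_refl _) hgeo4'
          (summable_geometric_of_lt_one (by norm_num) (by norm_num))
      have h2 : ∑' n : ℕ, ((1:ℝ)/4)^n = (1 - 1/4)⁻¹ :=
        tsum_geometric_of_lt_one (by norm_num) (by norm_num)
      rw [h2] at h1
      linarith
    have sJb : Summable (fun j : ↥J => (a ↑j + ((2:ℝ)^(j:ℕ))⁻¹ * a 1)^2) := by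
      refine Summable.of_nonneg_of_le (fun j => sq_nonneg _) (fun j => ?_)
        ((sJ.mul_left 2).add (hgeo4'.mul_left (2 * (a 1)^2)))
      have h4 : ((1:ℝ)/4)^(j:ℕ) = (((2:ℝ)^(j:ℕ))⁻¹)^2 := (twopow_inv_sq _).symm
      rw [h4]
      nlinarith [sq_nonneg (a ↑j - ((2:ℝ)^(j:ℕ))⁻¹ * a 1)]
    set SI : ℝ := ∑' i : ↥I, (a ↑i)^2 with hSIdef
    set SJa : ℝ := ∑' j : ↥J, (a ↑j)^2 with hSJadef
    set SJ : ℝ := ∑' j : ↥J, (a ↑j + ((2:ℝ)^(j:ℕ))⁻¹ * a 1)^2 with hSJdef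
    have hSI : HasSum (fun i : ↥I => (a ↑i)^2) SI := sI.hasSum
    have hSJa : HasSum (fun j : ↥J => (a ↑j)^2) SJa := sJ.hasSum
    have hSJ : HasSum (fun j : ↥J => (a ↑j + ((2:ℝ)^(j:ℕ))⁻¹ * a 1)^2) SJ := sJb.hasSum
    have hSInn : 0 ≤ SI := tsum_nonneg (fun i => sq_nonneg _)
    have hSJnn : 0 ≤ SJ := tsum_nonneg (fun j => sq_nonneg _)
    have hSJann : 0 ≤ SJa := tsum_nonneg (fun j => sq_nonneg _)
    -- the frame sum decomposes
    have hfinner : ∀ l, (inner ℝ x (f l) : ℝ)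
        = Sum.elim (fun i : ↥I => a ↑i) (fun j : ↥J => a ↑j + ((2:ℝ)^(j:ℕ))⁻¹ * a 1) l := by
      rintro (i | j)
      · rw [hfI]
        exact real_inner_comm (e ↑i) x
      · rw [hfJ, inner_add_right, real_inner_smul_right,
          real_inner_comm (e ↑j) x, real_inner_comm (e 1) x]
        rfl
    have hStot : HasSum (fun l => (inner ℝ x (f l) : ℝ)^2) (SI + SJ) := by
      refine hasSum_sumType' (f := fun l => (inner ℝ x (f l) : ℝ)^2) ?_ ?_
      · have heq : (fun i : ↥I => (inner ℝ x (f (Sum.inl i)) : ℝ)^2)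
            = fun i : ↥I => (a ↑i)^2 := by
          funext i; rw [hfinner]; rfl
        rw [heq]; exact hSI
      · have heq : (fun j : ↥J => (inner ℝ x (f (Sum.inr j)) : ℝ)^2)
            = fun j : ↥J => (a ↑j + ((2:ℝ)^(j:ℕ))⁻¹ * a 1)^2 := by
          funext j; rw [hfinner]; rfl
        rw [heq]; exact hSJ
    -- Parseval pieces
    have hKind2 : HasSum (Set.indicator K h) (‖x‖^2) := by
      rw [← hasSum_subtype_iff_indicator]
      exact hxpar
    have h1ind2 : HasSum (Set.indicator {1} h) ((a 1)^2) := by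
      have heq : Set.indicator {(1:ℕ)} h = fun n => if n = 1 then (a 1)^2 else 0 := by
        funext n
        by_cases hn : n = 1
        · subst hn; simp [Set.indicator, h]
        · simp [Set.indicator, hn]
      rw [heq]
      exact hasSum_ite_eq 1 _
    have hIind2 : HasSum (Set.indicator I h) SI :=
      (hasSum_subtype_iff_indicator (s := I)).mp hSI
    have hJind2 : HasSum (Set.indicator J h) SJa :=
      (hasSum_subtype_iff_indicator (s := J)).mp hSJa
    have hKsub : ∀ s' : Set ℕ, s' ⊆ K → ∀ n, Set.indicator s' h n ≤ Set.indicator K h n := by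
      intro s' hsub n
      exact Set.indicator_le_indicator_of_subset hsub (fun m => sq_nonneg _) n
    have hSIle : SI ≤ ‖x‖^2 :=
      hasSum_le (hKsub I (fun n hn => Or.inr (Or.inl hn))) hIind2 hKind2
    have hSJale : SJa ≤ ‖x‖^2 :=
      hasSum_le (hKsub J (fun n hn => Or.inr (Or.inr hn))) hJind2 hKind2
    have ha1le : (a 1)^2 ≤ ‖x‖^2 :=
      hasSum_le (hKsub {1} (fun n hn => Or.inl hn)) h1ind2 hKind2
    have hdisj1 : Disjoint ({1} : Set ℕ) (I ∪ J) := by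
      rw [Set.disjoint_left]
      rintro n hn hn'
      rw [Set.mem_singleton_iff] at hn
      exact hone (hn ▸ hn')
    have hIJind2 : HasSum (Set.indicator (I ∪ J) h) (‖x‖^2 - (a 1)^2) := by
      have h' := hKind2.sub h1ind2
      have heq : (fun n => Set.indicator K h n - Set.indicator {1} h n)
          = Set.indicator (I ∪ J) h := by
        funext n
        rw [hK, Set.insert_eq, Set.indicator_union_of_disjoint hdisj1]
        ring
      rwa [heq] at h'
    have hIJle : ‖x‖^2 - (a 1)^2 ≤ SI + SJa := by
      refine hasSum_le (fun n => ?_) hIJind2 (hIind2.add hJind2)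
      by_cases hnI : n ∈ I <;> by_cases hnJ : n ∈ J <;>
        simp [Set.indicator, hnI, hnJ, h] <;> nlinarith [sq_nonneg (a n)]
    -- lower-bound chain
    have hk₀SI : (a k₀)^2 ≤ SI := Summable.le_tsum sI ⟨k₀, hk₀I⟩ (fun i _ => sq_nonneg _)
    have hk₀SJ : (a k₀ + P⁻¹ * a 1)^2 ≤ SJ := by
      have h' := Summable.le_tsum sJb ⟨k₀, hk₀J⟩ (fun j _ => sq_nonneg _)
      exact h'
    have ha1S : (a 1)^2 ≤ 2*P^2*(SI + SJ) := by
      have hq : P * (a k₀ + P⁻¹ * a 1) = P * a k₀ + a 1 := by field_simp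
      have h1 : (P * a k₀ + a 1)^2 ≤ P^2 * SJ := by
        rw [← hq, mul_pow]
        exact mul_le_mul_of_nonneg_left hk₀SJ (sq_nonneg P)
      nlinarith [h1, mul_le_mul_of_nonneg_left hk₀SI (sq_nonneg P),
        sq_nonneg (P * a k₀ + a 1 + P * a k₀)]
    have hSJa_le : SJa ≤ 2*SJ + 2*(a 1)^2*G := by
      have hrhs : HasSum (fun j : ↥J =>
          2*(a ↑j + ((2:ℝ)^(j:ℕ))⁻¹ * a 1)^2 + (2*(a 1)^2)*((1:ℝ)/4)^(j:ℕ))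
          (2*SJ + (2*(a 1)^2)*G) := (hSJ.mul_left 2).add (hGsum.mul_left (2*(a 1)^2))
      have hpt : ∀ j : ↥J, (a ↑j)^2
          ≤ 2*(a ↑j + ((2:ℝ)^(j:ℕ))⁻¹ * a 1)^2 + (2*(a 1)^2)*((1:ℝ)/4)^(j:ℕ) := by
        intro j
        have h4 : ((1:ℝ)/4)^((j:ℕ)) = (((2:ℝ)^(j:ℕ))⁻¹)^2 := (twopow_inv_sq _).symm
        rw [h4]
        nlinarith [sq_nonneg (a ↑j + ((2:ℝ)^(j:ℕ))⁻¹ * a 1 + ((2:ℝ)^(j:ℕ))⁻¹ * a 1)]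
      have hle := hasSum_le hpt hSJa hrhs
      linarith
    have hSJ_le : SJ ≤ 2*SJa + 2*(a 1)^2*G := by
      have hrhs : HasSum (fun j : ↥J => 2*(a ↑j)^2 + (2*(a 1)^2)*((1:ℝ)/4)^(j:ℕ))
          (2*SJa + (2*(a 1)^2)*G) := (hSJa.mul_left 2).add (hGsum.mul_left (2*(a 1)^2))
      have hpt : ∀ j : ↥J, (a ↑j + ((2:ℝ)^(j:ℕ))⁻¹ * a 1)^2
          ≤ 2*(a ↑j)^2 + (2*(a 1)^2)*((1:ℝ)/4)^(j:ℕ) := by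
        intro j
        have h4 : ((1:ℝ)/4)^((j:ℕ)) = (((2:ℝ)^(j:ℕ))⁻¹)^2 := (twopow_inv_sq _).symm
        rw [h4]
        nlinarith [sq_nonneg (a ↑j - ((2:ℝ)^(j:ℕ))⁻¹ * a 1)]
      have hle := hasSum_le hpt hSJ hrhs
      linarith
    rw [hStot.tsum_eq]
    constructor
    · -- lower frame bound
      have hxbound : ‖x‖^2 ≤ (3 + 10*P^2) * (SI + SJ) := by
        have hGa1 : (a 1)^2 * G ≤ (2*P^2*(SI+SJ)) * 2 :=
          mul_le_mul ha1S hG2 hGnonneg (by positivity)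
        nlinarith [hIJle, hSJa_le, ha1S, hGa1, hSInn, hSJnn]
      have hCpos : (0:ℝ) < 3 + 10*P^2 := by positivity
      calc (3 + 10*P^2)⁻¹ * ‖x‖^2 ≤ (3 + 10*P^2)⁻¹ * ((3 + 10*P^2) * (SI + SJ)) := by
            exact mul_le_mul_of_nonneg_left hxbound (by positivity)
      _ = SI + SJ := by
            rw [← mul_assoc, inv_mul_cancel₀ (ne_of_gt hCpos), one_mul]
    · -- upper frame bound
      have hGa1' : (a 1)^2 * G ≤ ‖x‖^2 * 2 :=
        mul_le_mul ha1le hG2 hGnonneg (sq_nonneg _)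
      nlinarith [hSIle, hSJale, hSJ_le, hGa1', hSInn, hSJnn, sq_nonneg (a 1)]
  refine ⟨⟨T, hT, hrange⟩, hframe, ?_⟩
  show (Submodule.span ℝ (Set.range f)).topologicalClosure = _
  rw [hspan]
end

section
/- Let X be a Banach space with no closed subspace isomorphic to c₀, and let {x_n}_{n=1}^∞ ⊆ X satisfy sup_{Δ} ‖∑_{n∈Δ} x_n‖ < ∞, where the supremum is over all finite subsets Δ of ℕ. Then the series ∑_n x_n converges unconditionally in X. -/
open scoped BigOperators ZeroAtInfty
open Filter

/-- The series `∑ v i` converges (in the usual ordered sense of partial sums). -/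
def SeriesConverges {X : Type*} [NormedAddCommGroup X] [NormedSpace ℝ X] (v : ℕ → X) : Prop :=
  ∃ x : X, Tendsto (fun n => ∑ i ∈ Finset.range n, v i) atTop (nhds x)

section BPaux

variable {X : Type*} [NormedAddCommGroup X] [NormedSpace ℝ X]

/-- finite sums of `y` bounded by `M` gives ℓ¹ bound on functionals -/
lemma bp_dual_sum_bound {y : ℕ → X} {M : ℝ} (hM : ∀ G : Finset ℕ, ‖∑ k ∈ G, y k‖ ≤ M)
    (f : X →L[ℝ] ℝ) (F : Finset ℕ) : ∑ k ∈ F, |f (y k)| ≤ 2 * M * ‖f‖ := by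
  classical
  set P := F.filter (fun k => 0 ≤ f (y k)) with hP
  set N := F.filter (fun k => ¬ 0 ≤ f (y k)) with hN
  have hsplit : ∑ k ∈ F, |f (y k)| = ∑ k ∈ P, f (y k) + ∑ k ∈ N, (-(f (y k))) := by
    rw [hP, hN, ← Finset.sum_filter_add_sum_filter_not F (fun k => 0 ≤ f (y k))]
    congr 1
    · exact Finset.sum_congr rfl fun k hk => abs_of_nonneg (Finset.mem_filter.1 hk).2
    · exact Finset.sum_congr rfl fun k hk =>
        abs_of_neg (lt_of_not_ge (Finset.mem_filter.1 hk).2)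
  have h1 : ∑ k ∈ P, f (y k) ≤ M * ‖f‖ := by
    have : ∑ k ∈ P, f (y k) = f (∑ k ∈ P, y k) := (map_sum f _ _).symm
    rw [this]
    calc f (∑ k ∈ P, y k) ≤ ‖f (∑ k ∈ P, y k)‖ := le_abs_self _
      _ ≤ ‖f‖ * ‖∑ k ∈ P, y k‖ := f.le_opNorm _
      _ ≤ ‖f‖ * M := by
          exact mul_le_mul_of_nonneg_left (hM P) (norm_nonneg f)
      _ = M * ‖f‖ := mul_comm _ _
  have h2 : ∑ k ∈ N, (-(f (y k))) ≤ M * ‖f‖ := by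
    have : ∑ k ∈ N, (-(f (y k))) = -(f (∑ k ∈ N, y k)) := by
      rw [map_sum, Finset.sum_neg_distrib]
    rw [this]
    calc -(f (∑ k ∈ N, y k)) ≤ ‖f (∑ k ∈ N, y k)‖ := neg_le_abs _
      _ ≤ ‖f‖ * ‖∑ k ∈ N, y k‖ := f.le_opNorm _
      _ ≤ ‖f‖ * M := mul_le_mul_of_nonneg_left (hM N) (norm_nonneg f)
      _ = M * ‖f‖ := mul_comm _ _
  linarith

/-- scalar combinations bound -/
lemma bp_scalar_bound {y : ℕ → X} {M : ℝ} (hM : ∀ G : Finset ℕ, ‖∑ k ∈ G, y k‖ ≤ M)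
    (a : ℕ → ℝ) (F : Finset ℕ) {C : ℝ} (hC : 0 ≤ C) (ha : ∀ i ∈ F, |a i| ≤ C) :
    ‖∑ i ∈ F, a i • y i‖ ≤ 2 * M * C := by
  classical
  by_cases h0 : (∑ i ∈ F, a i • y i) = 0
  · rw [h0, norm_zero]
    have hM0 : 0 ≤ M := le_trans (norm_nonneg (0:X)) (by simpa using hM ∅)
    positivity
  obtain ⟨g, hg1, hg2⟩ := exists_dual_vector ℝ _ (norm_ne_zero_iff.2 h0)
  have : ‖∑ i ∈ F, a i • y i‖ = g (∑ i ∈ F, a i • y i) := by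
    rw [hg2]; norm_num
  rw [this, map_sum]
  calc ∑ i ∈ F, g (a i • y i) = ∑ i ∈ F, a i * g (y i) := by
        simp [map_smul, smul_eq_mul]
    _ ≤ ∑ i ∈ F, |a i * g (y i)| := Finset.sum_le_sum fun i _ => le_abs_self _
    _ = ∑ i ∈ F, |a i| * |g (y i)| := by simp [abs_mul]
    _ ≤ ∑ i ∈ F, C * |g (y i)| := Finset.sum_le_sum fun i hi =>
        mul_le_mul_of_nonneg_right (ha i hi) (abs_nonneg _)
    _ = C * ∑ i ∈ F, |g (y i)| := by rw [Finset.mul_sum]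
    _ ≤ C * (2 * M * ‖g‖) := mul_le_mul_of_nonneg_left (bp_dual_sum_bound hM g F) hC
    _ = 2 * M * C := by rw [hg1]; ring

/-- weakly null -/
lemma bp_weakly_null {y : ℕ → X} {M : ℝ} (hM : ∀ G : Finset ℕ, ‖∑ k ∈ G, y k‖ ≤ M)
    (f : X →L[ℝ] ℝ) : Tendsto (fun k => f (y k)) atTop (nhds 0) := by
  have hsum : Summable (fun k => |f (y k)|) :=
    summable_of_sum_range_le (fun n => abs_nonneg _)
      (fun n => bp_dual_sum_bound hM f (Finset.range n))
  have h := hsum.tendsto_atTop_zero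
  exact tendsto_zero_iff_abs_tendsto_zero (fun k => f (y k)) |>.2 h

/-- Weierstrass: ∏ (1 - δ j) ≥ 1 - ∑ δ j -/
lemma bp_prod_ge {δ : ℕ → ℝ} (h0 : ∀ j, 0 ≤ δ j) (h1 : ∀ j, δ j ≤ 1) (F : Finset ℕ) :
    1 - ∑ j ∈ F, δ j ≤ ∏ j ∈ F, (1 - δ j) := by
  classical
  induction F using Finset.induction_on with
  | empty => simp
  | insert _ _ hx ih =>
    rename_i a s
    rw [Finset.sum_insert hx, Finset.prod_insert hx]
    have hprod : 0 ≤ ∏ j ∈ s, (1 - δ j) :=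
      Finset.prod_nonneg fun j _ => by linarith [h1 j]
    have hprodle : ∏ j ∈ s, (1 - δ j) ≤ 1 :=
      Finset.prod_le_one (fun j _ => by linarith [h1 j]) (fun j _ => by linarith [h0 j])
    nlinarith [h0 a, h1 a, ih]

/-- geometric tail bound: ∑_{j∈F} 2^{-(j+2)} ≤ 1/2 -/
lemma bp_geom_bound (F : Finset ℕ) : ∑ j ∈ F, ((1:ℝ)/2) ^ (j + 2) ≤ 1/2 := by
  have hg : Summable (fun j : ℕ => ((1:ℝ)/2) ^ j) :=
    summable_geometric_of_lt_one (by norm_num) (by norm_num)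
  have hsummable : Summable (fun j : ℕ => ((1:ℝ)/2) ^ (j + 2)) := by
    have := hg.mul_right (((1:ℝ)/2)^2)
    exact this.congr fun j => (pow_add _ _ _).symm
  calc ∑ j ∈ F, ((1:ℝ)/2) ^ (j + 2) ≤ ∑' j : ℕ, ((1:ℝ)/2) ^ (j + 2) :=
        Summable.sum_le_tsum F (fun j _ => by positivity) hsummable
    _ = (∑' j : ℕ, ((1:ℝ)/2) ^ j) * ((1:ℝ)/2)^2 := by
        rw [← tsum_mul_right]; congr 1; ext j; rw [pow_add]
    _ = 2 * (1/4) := by rw [tsum_geometric_of_lt_one (by norm_num) (by norm_num)]; norm_num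
    _ = 1/2 := by norm_num

lemma bp_mazur {y : ℕ → X} {ε : ℝ} (hε : 0 < ε) (hylb : ∀ k, ε ≤ ‖y k‖)
    (hnull : ∀ f : X →L[ℝ] ℝ, Tendsto (fun k => f (y k)) atTop (nhds 0))
    (E : Submodule ℝ X) (hE : FiniteDimensional ℝ E) {δ : ℝ} (hδ0 : 0 < δ) (hδ1 : δ ≤ 1) :
    ∃ K : ℕ, ∀ k ≥ K, ∀ w ∈ E, ∀ t : ℝ, (1 - δ) * ‖w‖ ≤ ‖w + t • y k‖ := by
  classical
  haveI := hE
  -- the unit sphere of E, viewed inside X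
  set S : Set X := Subtype.val '' (Metric.sphere (0 : E) 1) with hS
  have hScomp : IsCompact S := ((isCompact_sphere (0 : E) 1).image continuous_subtype_val)
  obtain ⟨net, hnetS, hcover⟩ := hScomp.elim_nhds_subcover (fun e => Metric.ball e (δ/4))
    (fun e _ => Metric.ball_mem_nhds e (by positivity))
  have hnorm1 : ∀ e ∈ net, ‖e‖ = 1 := by
    intro e he
    obtain ⟨e', he', rfl⟩ := hnetS e he
    simpa using he'
  have hne : ∀ e ∈ net, e ≠ 0 := by
    intro e he h0
    have := hnorm1 e he
    rw [h0, norm_zero] at this; norm_num at this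
  have hfs : ∀ e : X, ∃ g : X →L[ℝ] ℝ, (e ∈ net → (‖g‖ = 1 ∧ g e = ‖e‖)) := by
    intro e
    by_cases he : e ∈ net
    · obtain ⟨g, hg1, hg2⟩ := exists_dual_vector ℝ e (norm_ne_zero_iff.2 (hne e he))
      exact ⟨g, fun _ => ⟨hg1, hg2⟩⟩
    · exact ⟨0, fun h => absurd h he⟩
  choose g hg using hfs
  have hev : ∀ᶠ k in atTop, ∀ e ∈ net, |g e (y k)| < δ * ε / 8 := by
    rw [Finset.eventually_all]
    intro e _
    have h := hnull (g e)
    have := Metric.tendsto_nhds.mp h (δ * ε / 8) (by positivity)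
    simpa [Real.dist_eq] using this
  obtain ⟨K, hK⟩ := eventually_atTop.1 hev
  refine ⟨K, fun k hk w hw t => ?_⟩
  by_cases hw0 : w = 0
  · simp only [hw0, norm_zero, mul_zero, zero_add]
    positivity
  have hwn : 0 < ‖w‖ := norm_pos_iff.2 hw0
  set u : X := ‖w‖⁻¹ • w with hu
  have huE : u ∈ E := E.smul_mem _ hw
  have hun : ‖u‖ = 1 := by
    rw [hu, norm_smul, norm_inv, norm_norm, inv_mul_cancel₀ (ne_of_gt hwn)]
  have huS : u ∈ S := by
    refine ⟨⟨u, huE⟩, ?_, rfl⟩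
    rw [Metric.mem_sphere, dist_zero_right]
    exact hun
  set s : ℝ := t / ‖w‖ with hs
  -- key claim on the sphere
  have key : 1 - δ ≤ ‖u + s • y k‖ := by
    by_cases hcase : 2 ≤ |s| * ε
    · have h1 : |s| * ε - 1 ≤ ‖s • y k‖ - ‖u‖ := by
        rw [norm_smul, hun, Real.norm_eq_abs]
        have : |s| * ε ≤ |s| * ‖y k‖ :=
          mul_le_mul_of_nonneg_left (hylb k) (abs_nonneg s)
        linarith
      have h2 : ‖s • y k‖ - ‖u‖ ≤ ‖u + s • y k‖ := by
        have := norm_sub_norm_le (s • y k) (-u)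
        rw [norm_neg] at this
        have h3 : s • y k - -u = u + s • y k := by abel
        rw [h3] at this
        linarith
      linarith
    · push_neg at hcase
      have hsle : |s| ≤ 2 / ε := by
        rw [le_div_iff₀ hε]; linarith
      obtain ⟨e, hemem, heball⟩ : ∃ e ∈ net, u ∈ Metric.ball e (δ/4) := by
        have := hcover huS
        simpa using this
      obtain ⟨hgnorm, hge⟩ := hg e hemem
      have hgy : |g e (y k)| < δ * ε / 8 := hK k hk e hemem
      have hdist : ‖u - e‖ < δ/4 := by
        rw [← dist_eq_norm]; exact Metric.mem_ball.1 heball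
      have hbound : 1 - δ/4 - δ/4 ≤ g e (u + s • y k) := by
        have expand : g e (u + s • y k) = g e e + g e (u - e) + s * g e (y k) := by
          have : u + s • y k = e + (u - e) + s • y k := by abel
          rw [this, map_add, map_add, map_smul, smul_eq_mul]
        rw [expand, hge, hnorm1 e hemem]
        have h1 : |g e (u - e)| ≤ ‖u - e‖ := by
          calc |g e (u - e)| ≤ ‖g e‖ * ‖u - e‖ := (g e).le_opNorm _
            _ = ‖u - e‖ := by rw [hgnorm, one_mul]
        have h2 : |s * g e (y k)| ≤ δ/4 := by
          rw [abs_mul]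
          calc |s| * |g e (y k)| ≤ (2/ε) * (δ * ε / 8) := by
                apply mul_le_mul hsle (le_of_lt hgy) (abs_nonneg _) (by positivity)
            _ = δ/4 := by field_simp; ring
        have l1 : -(δ/4) ≤ g e (u - e) := by
          have := abs_le.1 (le_of_lt (lt_of_le_of_lt h1 hdist)); linarith [this.1]
        have l2 : -(δ/4) ≤ s * g e (y k) := by
          have := abs_le.1 h2; linarith [this.1]
        linarith
      calc 1 - δ ≤ 1 - δ/4 - δ/4 := by linarith
        _ ≤ g e (u + s • y k) := hbound
        _ ≤ |g e (u + s • y k)| := le_abs_self _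
        _ ≤ ‖g e‖ * ‖u + s • y k‖ := (g e).le_opNorm _
        _ = ‖u + s • y k‖ := by rw [hgnorm, one_mul]
  -- rescale
  have hexp : w + t • y k = ‖w‖ • (u + s • y k) := by
    rw [smul_add, hu, smul_smul, mul_inv_cancel₀ (ne_of_gt hwn), one_smul,
      smul_smul, hs]
    congr 2
    field_simp
  rw [hexp, norm_smul, norm_norm]
  calc (1 - δ) * ‖w‖ = ‖w‖ * (1 - δ) := mul_comm _ _
    _ ≤ ‖w‖ * ‖u + s • y k‖ := mul_le_mul_of_nonneg_left key (le_of_lt hwn)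

/-- Key lemma: given a basic-type sequence with bounded finite sums and norms bounded below,
`X` contains a closed copy of c₀ -/
lemma bp_contains_c0 [CompleteSpace X] {y : ℕ → X} {M ε : ℝ} (hε : 0 < ε)
    (hMy : ∀ G : Finset ℕ, ‖∑ k ∈ G, y k‖ ≤ M) (hylb : ∀ k, ε ≤ ‖y k‖) :
    ∃ Y : Submodule ℝ X, IsClosed (Y : Set X) ∧ Nonempty (Y ≃L[ℝ] C₀(ℕ, ℝ)) := by
  classical
  have hM0 : 0 ≤ M := le_trans (norm_nonneg (0:X)) (by simpa using hMy ∅)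
  have hnull := bp_weakly_null hMy
  set η : ℕ → ℝ := fun m => (1/2 : ℝ)^(m+2) with hη
  have hη0 : ∀ m, 0 < η m := fun m => by positivity
  have hη1 : ∀ m, η m ≤ 1 := fun m => by
    rw [hη]; exact pow_le_one₀ (by norm_num) (by norm_num)
  -- Mazur selection function
  have hMaz : ∀ (F : Finset ℕ) (m : ℕ), ∃ K : ℕ, ∀ k ≥ K,
      ∀ w ∈ Submodule.span ℝ (y '' ↑F), ∀ t : ℝ, (1 - η m) * ‖w‖ ≤ ‖w + t • y k‖ := by
    intro F m
    exact bp_mazur hε hylb hnull _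
      (FiniteDimensional.span_of_finite ℝ ((F.finite_toSet).image y)) (hη0 m) (hη1 m)
  choose KM hKM using hMaz
  -- recursive subsequence
  set κ : ℕ → ℕ × Finset ℕ :=
    fun m => Nat.rec ((0:ℕ), ({0} : Finset ℕ))
      (fun m p => (max (p.1 + 1) (KM p.2 (m+1)),
        insert (max (p.1 + 1) (KM p.2 (m+1))) p.2)) m with hκ
  set k : ℕ → ℕ := fun m => (κ m).1 with hk
  have hκsucc1 : ∀ m, k (m+1) = max (k m + 1) (KM (κ m).2 (m+1)) := fun m => rfl
  have hκsucc2 : ∀ m, (κ (m+1)).2 = insert (k (m+1)) (κ m).2 := fun m => rfl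
  have hkmono : StrictMono k := by
    apply strictMono_nat_of_lt_succ
    intro m
    rw [hκsucc1]
    exact lt_of_lt_of_le (Nat.lt_succ_self _) (le_max_left _ _)
  have hF : ∀ m, (κ m).2 = (Finset.range (m+1)).image k := by
    intro m
    induction m with
    | zero => simp [hκ, hk]
    | succ m ih =>
      rw [hκsucc2, ih,
        show Finset.range (m+1+1) = insert (m+1) (Finset.range (m+1)) from Finset.range_add_one,
        Finset.image_insert]
  set z : ℕ → X := fun m => y (k m) with hz
  have hMz : ∀ G : Finset ℕ, ‖∑ i ∈ G, z i‖ ≤ M := by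
    intro G
    rw [hz]
    have : ∑ i ∈ G, y (k i) = ∑ j ∈ G.image k, y j :=
      (Finset.sum_image (fun a _ b _ h => hkmono.injective h)).symm
    rw [this]
    exact hMy _
  -- the chain inequality
  have hQ : ∀ (a : ℕ → ℝ) (m : ℕ),
      (1 - η m) * ‖∑ i ∈ Finset.range m, a i • z i‖ ≤ ‖∑ i ∈ Finset.range (m+1), a i • z i‖ := by
    intro a m
    match m with
    | 0 => simp
    | Nat.succ m' =>
      rw [Finset.sum_range_succ (fun i => a i • z i) (m'+1)]
      have hmem : (∑ i ∈ Finset.range (m'+1), a i • z i) ∈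
          Submodule.span ℝ (y '' ↑((κ m').2)) := by
        apply Submodule.sum_mem
        intro i hi
        apply Submodule.smul_mem
        apply Submodule.subset_span
        refine ⟨k i, ?_, rfl⟩
        rw [hF m']
        simp only [Finset.coe_image, Set.mem_image, Finset.mem_coe, Finset.mem_range]
        exact ⟨i, Finset.mem_range.1 hi, rfl⟩
      have hge : k (m'+1) ≥ KM (κ m').2 (m'+1) := by
        rw [hκsucc1]; exact le_max_right _ _
      exact hKM (κ m').2 (m'+1) (k (m'+1)) hge _ hmem (a (m'+1))
  -- accumulated chain
  have hprod : ∀ (a : ℕ → ℝ) (n m : ℕ), n ≤ m →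
      ‖∑ i ∈ Finset.range n, a i • z i‖ * ∏ j ∈ Finset.Ico n m, (1 - η j) ≤
      ‖∑ i ∈ Finset.range m, a i • z i‖ := by
    intro a n m hnm
    induction m, hnm using Nat.le_induction with
    | base => simp
    | succ m hnm ih =>
      rw [Finset.prod_Ico_succ_top hnm]
      calc ‖∑ i ∈ Finset.range n, a i • z i‖ * ((∏ j ∈ Finset.Ico n m, (1 - η j)) * (1 - η m))
          = (1 - η m) * (‖∑ i ∈ Finset.range n, a i • z i‖ * ∏ j ∈ Finset.Ico n m, (1 - η j)) := by ring
        _ ≤ (1 - η m) * ‖∑ i ∈ Finset.range m, a i • z i‖ := by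
            apply mul_le_mul_of_nonneg_left ih
            linarith [hη1 m]
        _ ≤ ‖∑ i ∈ Finset.range (m+1), a i • z i‖ := hQ a m
  have hhalf : ∀ (a : ℕ → ℝ) (n m : ℕ), n ≤ m →
      ‖∑ i ∈ Finset.range n, a i • z i‖ * (1/2) ≤ ‖∑ i ∈ Finset.range m, a i • z i‖ := by
    intro a n m hnm
    refine le_trans ?_ (hprod a n m hnm)
    apply mul_le_mul_of_nonneg_left _ (norm_nonneg _)
    refine le_trans ?_ (bp_prod_ge (fun j => le_of_lt (hη0 j)) hη1 _)
    have := bp_geom_bound (Finset.Ico n m)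
    rw [hη]
    linarith
  -- coefficient bound
  have hcoef : ∀ (a : ℕ → ℝ) (i m : ℕ), i < m →
      |a i| * ε ≤ 4 * ‖∑ j ∈ Finset.range m, a j • z j‖ := by
    intro a i m him
    have h1 : |a i| * ε ≤ ‖a i • z i‖ := by
      rw [norm_smul, Real.norm_eq_abs]
      exact mul_le_mul_of_nonneg_left (hylb (k i)) (abs_nonneg _)
    have h2 : a i • z i = (∑ j ∈ Finset.range (i+1), a j • z j) -
        (∑ j ∈ Finset.range i, a j • z j) := by
      rw [Finset.sum_range_succ]; abel
    have h3 : ‖a i • z i‖ ≤ ‖∑ j ∈ Finset.range (i+1), a j • z j‖ +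
        ‖∑ j ∈ Finset.range i, a j • z j‖ := by
      rw [h2]; exact norm_sub_le _ _
    have h4 := hhalf a (i+1) m him
    have h5 := hhalf a i m (le_of_lt him)
    linarith
  -- basic facts about C₀ elements
  have habs : ∀ (a : C₀(ℕ,ℝ)) (i : ℕ), |a i| ≤ ‖a‖ := by
    intro a i
    have h := BoundedContinuousFunction.norm_coe_le_norm a.toBCF i
    simpa [ZeroAtInftyContinuousMap.norm_toBCF_eq_norm] using h
  have ha0 : ∀ a : C₀(ℕ,ℝ), Tendsto (fun i => a i) atTop (nhds 0) := by
    intro a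
    have h := zero_at_infty a
    rwa [cocompact_eq_atTop] at h
  have hsummA : ∀ a : C₀(ℕ,ℝ), Summable (fun i => a i • z i) := by
    intro a
    rw [summable_iff_vanishing_norm]
    intro ε' hε'
    have hpos : (0:ℝ) < ε' / (2*(M+1)) := by positivity
    obtain ⟨N, hN⟩ := eventually_atTop.1 (Metric.tendsto_nhds.mp (ha0 a) _ hpos)
    refine ⟨Finset.range N, fun t ht => ?_⟩
    have hb : ∀ i ∈ t, |a i| ≤ ε' / (2*(M+1)) := by
      intro i hi
      have hiN : N ≤ i := by
        by_contra h
        push_neg at h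
        exact (Finset.disjoint_left.1 ht hi) (Finset.mem_range.2 h)
      have h := hN i hiN
      rw [Real.dist_eq, sub_zero] at h
      exact le_of_lt h
    calc ‖∑ i ∈ t, a i • z i‖ ≤ 2 * M * (ε' / (2*(M+1))) :=
          bp_scalar_bound hMz _ t (le_of_lt hpos) hb
      _ = ε' * (M / (M+1)) := by field_simp
      _ < ε' * 1 := by
          apply mul_lt_mul_of_pos_left _ hε'
          rw [div_lt_one (by linarith)]
          linarith
      _ = ε' := mul_one _
  set T : C₀(ℕ,ℝ) →ₗ[ℝ] X := {
    toFun := fun a => ∑' i, a i • z i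
    map_add' := by
      intro a b
      have h : (fun i => ((a + b) i) • z i) = fun i => a i • z i + b i • z i := by
        funext i
        simp [add_smul]
      show (∑' i, ((a + b) i) • z i) = (∑' i, a i • z i) + ∑' i, b i • z i
      rw [h]
      exact Summable.tsum_add (hsummA a) (hsummA b)
    map_smul' := by
      intro c a
      have h : (fun i => ((c • a) i) • z i) = fun i => c • (a i • z i) := by
        funext i
        simp [smul_smul]
      show (∑' i, ((c • a) i) • z i) = c • ∑' i, a i • z i
      rw [h]
      exact Summable.tsum_const_smul c (hsummA a) } with hT
  have htsum : ∀ a : C₀(ℕ,ℝ), HasSum (fun i => a i • z i) (T a) :=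
    fun a => (hsummA a).hasSum
  have hTle : ∀ a : C₀(ℕ,ℝ), ‖T a‖ ≤ 2 * M * ‖a‖ := by
    intro a
    have ht : Tendsto (fun s : Finset ℕ => ‖∑ i ∈ s, a i • z i‖) atTop (nhds ‖T a‖) :=
      (htsum a).norm
    exact le_of_tendsto ht (Eventually.of_forall fun s =>
      bp_scalar_bound hMz _ s (norm_nonneg a) (fun i _ => habs a i))
  have hTlow : ∀ a : C₀(ℕ,ℝ), ‖a‖ ≤ 4/ε * ‖T a‖ := by
    intro a
    have hcl : ∀ i, |a i| * ε ≤ 4 * ‖T a‖ := by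
      intro i
      have htend : Tendsto (fun m => (4:ℝ) * ‖∑ j ∈ Finset.range m, a j • z j‖) atTop
          (nhds (4 * ‖T a‖)) := ((htsum a).tendsto_sum_nat.norm).const_mul 4
      refine ge_of_tendsto htend ?_
      rw [eventually_atTop]
      exact ⟨i+1, fun m hm => hcoef a i m (lt_of_lt_of_le (Nat.lt_succ_self i) hm)⟩
    have h4 : (0:ℝ) ≤ 4/ε * ‖T a‖ := by positivity
    rw [← ZeroAtInftyContinuousMap.norm_toBCF_eq_norm]
    rw [BoundedContinuousFunction.norm_le h4]
    intro i
    have h := hcl i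
    rw [Real.norm_eq_abs]
    rw [div_mul_eq_mul_div, le_div_iff₀ hε]
    show |a i| * ε ≤ 4 * ‖T a‖
    exact h
  set TC : C₀(ℕ,ℝ) →L[ℝ] X := T.mkContinuous (2*M) hTle with hTC
  have hTCapp : ∀ a, TC a = T a := fun a => rfl
  have hanti : AntilipschitzWith (Real.toNNReal (4/ε)) TC :=
    TC.antilipschitz_of_bound (fun a => by
      rw [Real.coe_toNNReal _ (by positivity)]
      rw [hTCapp]
      exact hTlow a)
  have hce := hanti.isClosedEmbedding TC.uniformContinuous
  have hclosed : IsClosed ((LinearMap.range (TC : C₀(ℕ,ℝ) →ₗ[ℝ] X) : Submodule ℝ X) : Set X) := by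
    rw [LinearMap.coe_range]
    exact hce.isClosed_range
  refine ⟨LinearMap.range (TC : C₀(ℕ,ℝ) →ₗ[ℝ] X), hclosed, ?_⟩
  haveI : CompleteSpace (LinearMap.range (TC : C₀(ℕ,ℝ) →ₗ[ℝ] X) : Submodule ℝ X) := hclosed.completeSpace_coe
  set f' := TC.codRestrict (LinearMap.range (TC : C₀(ℕ,ℝ) →ₗ[ℝ] X)) (fun a => LinearMap.mem_range_self _ a) with hf'
  have hker : LinearMap.ker f'.toLinearMap = ⊥ := by
    rw [hf', ContinuousLinearMap.ker_codRestrict]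
    exact LinearMap.ker_eq_bot.2 hanti.injective
  have hrange : LinearMap.range f'.toLinearMap = ⊤ := by
    rw [LinearMap.range_eq_top]
    rintro ⟨xx, a, rfl⟩
    exact ⟨a, rfl⟩
  exact ⟨(ContinuousLinearEquiv.ofBijective f' hker hrange).symm⟩


lemma bp_summable [CompleteSpace X]
    (hc0 : ¬ ∃ Y : Submodule ℝ X, IsClosed (Y : Set X) ∧ Nonempty (Y ≃L[ℝ] C₀(ℕ, ℝ)))
    (x : ℕ → X) {M : ℝ} (hbd : ∀ Δ : Finset ℕ, ‖∑ n ∈ Δ, x n‖ ≤ M) : Summable x := by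
  classical
  by_contra hnot
  rw [summable_iff_vanishing_norm] at hnot
  push_neg at hnot
  obtain ⟨ε, hε, hfail⟩ := hnot
  choose g hg1 hg2 using hfail
  -- hg1 : Disjoint (g s) s, hg2 : ε ≤ ‖∑ i ∈ g s, x i‖
  set S : ℕ → Finset ℕ := fun n => Nat.rec ∅ (fun _ Sk => Sk ∪ g Sk) n with hS
  have hSsucc : ∀ n, S (n+1) = S n ∪ g (S n) := fun n => rfl
  set Δ : ℕ → Finset ℕ := fun n => g (S n) with hΔ
  set y : ℕ → X := fun n => ∑ i ∈ Δ n, x i with hy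
  have hSmono : Monotone S := monotone_nat_of_le_succ (fun n => by
    rw [hSsucc]; exact Finset.subset_union_left)
  have hΔS : ∀ j n, j < n → Δ j ⊆ S n := by
    intro j n hjn
    have h1 : Δ j ⊆ S (j+1) := by rw [hSsucc]; exact Finset.subset_union_right
    exact h1.trans (hSmono hjn)
  have hdisj : ∀ j n, j ≠ n → Disjoint (Δ j) (Δ n) := by
    have key : ∀ j n, j < n → Disjoint (Δ j) (Δ n) := by
      intro j n hjn
      exact Disjoint.symm ((hg1 (S n)).mono_right (hΔS j n hjn))
    intro j n hjn
    rcases lt_or_gt_of_ne hjn with h | h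
    · exact key j n h
    · exact (key n j h).symm
  have hMy : ∀ G : Finset ℕ, ‖∑ k ∈ G, y k‖ ≤ M := by
    intro G
    have hpd : (G : Set ℕ).PairwiseDisjoint Δ := fun j _ n _ hjn => hdisj j n hjn
    rw [hy]
    have h := Finset.sum_biUnion (f := x) hpd
    rw [← h]
    exact hbd _
  have hylb : ∀ k, ε ≤ ‖y k‖ := fun k => hg2 (S k)
  exact hc0 (bp_contains_c0 hε hMy hylb)


end BPaux

theorem stmt_18 {X : Type*} [NormedAddCommGroup X] [NormedSpace ℝ X] [CompleteSpace X]
    -- no closed subspace of `X` is isomorphic to `c₀`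
    (hc0 : ¬ ∃ Y : Submodule ℝ X, IsClosed (Y : Set X) ∧ Nonempty (Y ≃L[ℝ] C₀(ℕ, ℝ)))
    (x : ℕ → X)
    (hbd : ∃ M : ℝ, ∀ Δ : Finset ℕ, ‖∑ n ∈ Δ, x n‖ ≤ M) :
    -- `∑ xₙ` converges unconditionally
    ∀ π : Equiv.Perm ℕ, SeriesConverges (fun n => x (π n)) := by
  obtain ⟨M, hM⟩ := hbd
  have hsum : Summable x := bp_summable hc0 x hM
  intro π
  obtain ⟨s, hs⟩ := hsum
  have hπ : HasSum (fun n => x (π n)) s := (Equiv.hasSum_iff π).2 hs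
  exact ⟨s, hπ.tendsto_sum_nat⟩
end
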